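/- arXiv:1904.00527 — 7 statements merged into one kernel-verified Lean document; each statement's English description precedes it below -/
import Mathlib

section
/- Let W be a Coxeter group, J a subset of simple reflections, and (v,w), (v',w') ∈ Q_J. If there exists r ∈ W_J (not assumed length-additive with v) with v' ≤ vr ≤ wr ≤ w', then there exists r' ∈ W_J with ℓ(vr') = ℓ(v) + ℓ(r') and v' ≤ vr' ≤ wr' ≤ w'. -/
variable {B W : Type*} [Group W]

namespace CoxAux

open CoxeterSystem List

variable {M : CoxeterMatrix B} (cs : CoxeterSystem M W)

local prefix:100 "ℓ" => cs.length
local prefix:100 "π" => cs.wordProd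
local prefix:100 "σ" => cs.simple

open scoped Classical in
/-- auxiliary function for the permutation representation on `W × ZMod 2`. -/
noncomputable def rpf (i : B) : W × ZMod 2 → W × ZMod 2 :=
  fun p => (σ i * p.1 * σ i, p.2 + if p.1 = σ i then 1 else 0)

lemma simple_conj_eq_simple_iff (i : B) (t : W) : (σ i * t * σ i = σ i) ↔ (t = σ i) := by
  constructor
  · intro h
    have := congrArg (fun x => σ i * x * σ i) h
    simp only [← mul_assoc] at this
    rw [cs.simple_mul_simple_self] at this
    simpa [mul_assoc, cs.simple_mul_simple_self] using this
  · rintro rfl; simp [mul_assoc, cs.simple_mul_simple_self]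

lemma rpf_invol (i : B) : Function.Involutive (rpf cs i) := by
  classical
  rintro ⟨t, e⟩
  simp only [rpf]
  have h1 : σ i * (σ i * t * σ i) * σ i = t := by
    simp only [← mul_assoc]
    rw [cs.simple_mul_simple_self]
    simp [mul_assoc, cs.simple_mul_simple_self]
  refine Prod.ext h1 ?_
  simp only [simple_conj_eq_simple_iff cs i t]
  by_cases h : t = σ i <;> simp only [h, if_true, if_false, if_pos rfl]
  · show e + 1 + 1 = e
    have : (1 : ZMod 2) + 1 = 0 := by decide
    rw [add_assoc, this, add_zero]
  · simp [h]

end CoxAux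

namespace CoxAux2
open CoxeterSystem List CoxAux

variable {M : CoxeterMatrix B} (cs : CoxeterSystem M W)

local prefix:100 "ℓ" => cs.length
local prefix:100 "π" => cs.wordProd
local prefix:100 "σ" => cs.simple

/-- The permutation of `W × ZMod 2` associated to a simple reflection. -/
noncomputable def rperm (i : B) : Equiv.Perm (W × ZMod 2) := (rpf_invol cs i).toPerm

open scoped Classical in
lemma rperm_apply (i : B) (t : W) (e : ZMod 2) :
    rperm cs i (t, e) = (σ i * t * σ i, e + if t = σ i then 1 else 0) := rfl

open scoped Classical in
noncomputable def chi (i j : B) (t : W) : ZMod 2 :=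
  (if t = σ j then 1 else 0) + (if t = σ j * σ i * σ j then 1 else 0)

private lemma conj_pow_succ : ∀ (g t : W) (k : ℕ),
    g ^ k * (g * t * g⁻¹) * (g ^ k)⁻¹ = g ^ (k+1) * t * (g ^ (k+1))⁻¹ := by
  intro g t k
  rw [pow_succ']
  group

lemma rperm_mul_pow_apply (i j : B) (k : ℕ) (t : W) (e : ZMod 2) :
    ((rperm cs i * rperm cs j) ^ k) (t, e) =
      ((σ i * σ j) ^ k * t * ((σ i * σ j) ^ k)⁻¹,
        e + ∑ l ∈ Finset.range k, chi cs i j ((σ i * σ j) ^ l * t * ((σ i * σ j) ^ l)⁻¹)) := by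
  classical
  induction k generalizing t e with
  | zero => simp
  | succ k ih =>
      have hmul : ((rperm cs i * rperm cs j) ^ (k+1)) (t, e)
          = ((rperm cs i * rperm cs j) ^ k) ((rperm cs i * rperm cs j) (t, e)) := by
        rw [pow_succ]
        rfl
      have hg : (rperm cs i * rperm cs j) (t, e)
          = ((σ i * σ j) * t * (σ i * σ j)⁻¹, e + chi cs i j t) := by
        show rperm cs i (rperm cs j (t, e)) = _
        rw [rperm_apply, rperm_apply]
        have hinv : (σ i * σ j)⁻¹ = σ j * σ i := by
          rw [mul_inv_rev, cs.inv_simple, cs.inv_simple]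
        have hcond : (σ j * t * σ j = σ i) ↔ (t = σ j * σ i * σ j) := by
          constructor
          · intro h
            have := congrArg (fun x => σ j * x * σ j) h
            simp only [← mul_assoc] at this
            rw [cs.simple_mul_simple_self] at this
            simp only [one_mul] at this
            rw [← this]
            simp [mul_assoc, cs.simple_mul_simple_self]
          · rintro rfl
            simp only [← mul_assoc]
            rw [cs.simple_mul_simple_self, one_mul]
            simp [mul_assoc, cs.simple_mul_simple_self]
        refine Prod.ext ?_ ?_
        · show σ i * (σ j * t * σ j) * σ i = _
          rw [hinv]; group
        · show e + (if t = σ j then 1 else 0) + (if σ j * t * σ j = σ i then 1 else 0)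
            = e + chi cs i j t
          rw [chi]
          simp only [hcond]
          ring
      rw [hmul, hg, ih]
      refine Prod.ext ?_ ?_
      · exact conj_pow_succ (σ i * σ j) t k
      · show e + chi cs i j t + ∑ l ∈ Finset.range k,
            chi cs i j ((σ i * σ j) ^ l * ((σ i * σ j) * t * (σ i * σ j)⁻¹) * ((σ i * σ j) ^ l)⁻¹)
          = e + ∑ l ∈ Finset.range (k+1),
            chi cs i j ((σ i * σ j) ^ l * t * ((σ i * σ j) ^ l)⁻¹)
        rw [Finset.sum_range_succ']
        have : ∀ l : ℕ, (σ i * σ j) ^ l * ((σ i * σ j) * t * (σ i * σ j)⁻¹) * ((σ i * σ j) ^ l)⁻¹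
            = (σ i * σ j) ^ (l+1) * t * ((σ i * σ j) ^ (l+1))⁻¹ :=
          fun l => conj_pow_succ (σ i * σ j) t l
        simp only [this, pow_zero, one_mul, inv_one, mul_one]
        ring

lemma conj_simple_pow (i j : B) (l : ℕ) :
    ((σ i * σ j) ^ l)⁻¹ * σ j * (σ i * σ j) ^ l = σ j * (σ i * σ j) ^ (2*l) := by
  have hconj : σ j * (σ i * σ j) * (σ j)⁻¹ = (σ i * σ j)⁻¹ := by
    rw [cs.inv_simple, mul_inv_rev, cs.inv_simple, cs.inv_simple]
    simp [mul_assoc, cs.simple_mul_simple_self]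
  have h1 : σ j * (σ i * σ j) ^ l * (σ j)⁻¹ = ((σ i * σ j) ^ l)⁻¹ := by
    rw [← conj_pow, hconj, inv_pow]
  have h2 : ((σ i * σ j) ^ l)⁻¹ = σ j * (σ i * σ j) ^ l * σ j := by
    rw [← h1, cs.inv_simple]
  rw [h2]
  rw [two_mul, pow_add]
  simp [mul_assoc, cs.simple_mul_simple_self]

lemma conj_simple_pow' (i j : B) (l : ℕ) :
    ((σ i * σ j) ^ l)⁻¹ * (σ j * σ i * σ j) * (σ i * σ j) ^ l
      = σ j * (σ i * σ j) ^ (2*l+1) := by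
  have key : σ j * σ i * σ j = (σ i * σ j)⁻¹ * σ j := by
    rw [mul_inv_rev, cs.inv_simple, cs.inv_simple]
  rw [key, ← mul_assoc, ← mul_inv_rev, ← pow_succ']
  have h1 := conj_simple_pow cs i j (l+1)
  have hl : (σ i * σ j) ^ l = (σ i * σ j) ^ (l+1) * (σ i * σ j)⁻¹ := by
    rw [pow_succ]
    group
  rw [hl, ← mul_assoc, h1]
  have h2 : 2*(l+1) = (2*l+1) + 1 := by ring
  rw [h2, pow_succ]
  group

open scoped Classical in
lemma chi_conj_eq (i j : B) (t : W) (l : ℕ) :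
    chi cs i j ((σ i * σ j) ^ l * t * ((σ i * σ j) ^ l)⁻¹)
      = (if t = σ j * (σ i * σ j) ^ (2*l) then 1 else 0)
        + (if t = σ j * (σ i * σ j) ^ (2*l+1) then 1 else 0) := by
  rw [chi]
  congr 1
  · congr 1
    rw [eq_iff_iff]
    rw [← conj_simple_pow cs i j l]
    constructor
    · intro h
      have := congrArg (fun x => ((σ i * σ j) ^ l)⁻¹ * x * (σ i * σ j) ^ l) h
      simpa [mul_assoc] using this
    · intro h
      rw [h]
      group
  · congr 1
    rw [eq_iff_iff]
    rw [← conj_simple_pow' cs i j l]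
    constructor
    · intro h
      have := congrArg (fun x => ((σ i * σ j) ^ l)⁻¹ * x * (σ i * σ j) ^ l) h
      simpa [mul_assoc] using this
    · intro h
      rw [h]
      group

lemma sum_pair (f : ℕ → ZMod 2) (m : ℕ) :
    ∑ l ∈ Finset.range m, (f (2*l) + f (2*l+1)) = ∑ e ∈ Finset.range (2*m), f e := by
  induction m with
  | zero => simp
  | succ m ih =>
      rw [Finset.sum_range_succ, ih, Nat.mul_succ]
      rw [Finset.sum_range_succ, Finset.sum_range_succ]
      ring_nf

lemma chi_sum_zero (i j : B) (t : W) :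
    ∑ l ∈ Finset.range (M i j), chi cs i j ((σ i * σ j) ^ l * t * ((σ i * σ j) ^ l)⁻¹) = 0 := by
  classical
  set f : ℕ → ZMod 2 := fun e => if t = σ j * (σ i * σ j) ^ e then 1 else 0 with hf
  have h1 : ∑ l ∈ Finset.range (M i j), chi cs i j ((σ i * σ j) ^ l * t * ((σ i * σ j) ^ l)⁻¹)
      = ∑ l ∈ Finset.range (M i j), (f (2*l) + f (2*l+1)) := by
    apply Finset.sum_congr rfl
    intro l _
    rw [chi_conj_eq]
  rw [h1, sum_pair, two_mul, Finset.sum_range_add]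
  have h2 : ∀ e : ℕ, f (M i j + e) = f e := by
    intro e
    simp only [hf, pow_add, cs.simple_mul_simple_pow i j, one_mul]
  simp only [h2]
  have : ∀ x : ZMod 2, x + x = 0 := by decide
  exact this _

lemma rperm_liftable : M.IsLiftable (rperm cs) := by
  intro i j
  refine Equiv.ext fun x => ?_
  rcases x with ⟨t, e⟩
  rw [rperm_mul_pow_apply, chi_sum_zero, cs.simple_mul_simple_pow i j]
  simp

/-- The permutation representation of the Coxeter group on `W × ZMod 2`. -/
noncomputable def Phi : W →* Equiv.Perm (W × ZMod 2) := cs.lift ⟨rperm cs, rperm_liftable cs⟩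

lemma Phi_simple (i : B) : Phi cs (σ i) = rperm cs i := cs.lift_apply_simple (rperm_liftable cs) i

local prefix:100 "ris" => cs.rightInvSeq

open scoped Classical in
lemma Phi_wordProd (ω : List B) (t : W) (e : ZMod 2) :
    Phi cs (π ω) (t, e)
      = (π ω * t * (π ω)⁻¹, e + (((ris ω).count t : ℕ) : ZMod 2)) := by
  induction ω generalizing t e with
  | nil => simp [Phi]
  | cons i ω ih =>
      rw [cs.wordProd_cons, map_mul, Phi_simple]
      have h1 : (rperm cs i * Phi cs (π ω)) (t, e)
          = rperm cs i (Phi cs (π ω) (t, e)) := rfl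
      rw [h1, ih, rperm_apply]
      have hris : ris (i :: ω) = (π ω)⁻¹ * σ i * π ω :: ris ω := rfl
      refine Prod.ext ?_ ?_
      · show σ i * (π ω * t * (π ω)⁻¹) * σ i = _
        rw [mul_inv_rev, cs.inv_simple]
        group
      · show e + ((ris ω).count t : ZMod 2) + (if π ω * t * (π ω)⁻¹ = σ i then 1 else 0)
          = e + (((ris (i :: ω)).count t : ℕ) : ZMod 2)
        rw [hris]
        have hcond : (π ω * t * (π ω)⁻¹ = σ i) ↔ (t = (π ω)⁻¹ * σ i * π ω) := by
          constructor
          · intro h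
            rw [← h]; group
          · intro h
            rw [h]; group
        rw [List.count_cons]
        push_cast
        rw [add_assoc]
        congr 1
        simp only [hcond, beq_iff_eq]
        by_cases hc : t = (π ω)⁻¹ * σ i * π ω
        · simp [hc, add_comm]
        · have hc2 : ¬((π ω)⁻¹ * σ i * π ω = t) := fun h => hc h.symm
          simp [hc, hc2, add_comm]

/-- The reflection-parity function. -/
noncomputable def nn (w t : W) : ZMod 2 := (Phi cs w (t, 0)).2

open scoped Classical in
lemma nn_wordProd (ω : List B) (t : W) : nn cs (π ω) t = (((ris ω).count t : ℕ) : ZMod 2) := by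
  rw [nn, Phi_wordProd]
  simp

lemma Phi_apply (w t : W) (e : ZMod 2) :
    Phi cs w (t, e) = (w * t * w⁻¹, e + nn cs w t) := by
  classical
  obtain ⟨ω, -, rfl⟩ := cs.exists_reduced_word w
  rw [Phi_wordProd, nn_wordProd]

lemma nn_mul (a b t : W) : nn cs (a * b) t = nn cs b t + nn cs a (b * t * b⁻¹) := by
  have h1 : Phi cs (a * b) (t, 0) = Phi cs a (Phi cs b (t, 0)) := by
    rw [map_mul]; rfl
  have h2 := Phi_apply cs b t 0
  have h3 := Phi_apply cs a (b * t * b⁻¹) (0 + nn cs b t)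
  rw [h2, h3] at h1
  have := congrArg Prod.snd h1
  rw [nn] at this ⊢
  rw [this, Phi_apply]
  simp [add_comm]

open scoped Classical in
lemma nn_simple (i : B) (t : W) : nn cs (σ i) t = if t = σ i then 1 else 0 := by
  rw [nn, Phi_simple, rperm_apply]
  simp

lemma nn_one (t : W) : nn cs 1 t = 0 := by
  rw [nn, map_one]
  rfl

lemma nn_inv (u x : W) : nn cs u⁻¹ x = nn cs u (u⁻¹ * x * u) := by
  have h := nn_mul cs u u⁻¹ x
  rw [mul_inv_cancel, nn_one] at h
  rw [inv_inv] at h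
  have key : ∀ a b : ZMod 2, 0 = a + b → a = b := by decide
  exact key _ _ h

end CoxAux2

namespace CoxAux3
open CoxeterSystem List CoxAux CoxAux2

variable {M : CoxeterMatrix B} (cs : CoxeterSystem M W)

local prefix:100 "ℓ" => cs.length
local prefix:100 "π" => cs.wordProd
local prefix:100 "σ" => cs.simple
local prefix:100 "ris" => cs.rightInvSeq

lemma nn_refl_self {t : W} (ht : cs.IsReflection t) : nn cs t t = 1 := by
  obtain ⟨g, i, rfl⟩ := ht
  have h1 : nn cs (g * (σ i * g⁻¹)) (g * σ i * g⁻¹)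
      = nn cs (σ i * g⁻¹) (g * σ i * g⁻¹)
        + nn cs g ((σ i * g⁻¹) * (g * σ i * g⁻¹) * (σ i * g⁻¹)⁻¹) := by
    exact nn_mul cs g (σ i * g⁻¹) (g * σ i * g⁻¹)
  have e1 : (σ i * g⁻¹) * (g * σ i * g⁻¹) * (σ i * g⁻¹)⁻¹ = σ i := by
    rw [mul_inv_rev, inv_inv, cs.inv_simple]
    have : σ i * g⁻¹ * (g * σ i * g⁻¹) = g⁻¹ := by
      simp only [← mul_assoc, mul_assoc (σ i) g⁻¹ g, inv_mul_cancel, mul_one]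
      rw [cs.simple_mul_simple_self, one_mul]
    rw [this]
    group
  have h2 : nn cs (σ i * g⁻¹) (g * σ i * g⁻¹)
      = nn cs g⁻¹ (g * σ i * g⁻¹) + nn cs (σ i) (g⁻¹ * (g * σ i * g⁻¹) * g⁻¹⁻¹) := by
    exact nn_mul cs (σ i) g⁻¹ (g * σ i * g⁻¹)
  have e2 : g⁻¹ * (g * σ i * g⁻¹) * g⁻¹⁻¹ = σ i := by group
  have h3 : nn cs g⁻¹ (g * σ i * g⁻¹) = nn cs g (σ i) := by
    rw [nn_inv]
    congr 1
    group
  rw [← mul_assoc] at h1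
  rw [h1, h2, e1, e2, h3, nn_simple]
  simp only [if_pos rfl]
  have : ∀ a : ZMod 2, a + 1 + a = 1 := by decide
  exact this _

lemma nn_eq_zero_of_ascent : ∀ n (w t : W), cs.IsReflection t → ℓ w = n →
    ℓ w < ℓ (w * t) → nn cs w t = 0 := by
  intro n
  induction n using Nat.strong_induction_on with
  | _ n ih =>
    intro w t ht hw hlt
    rcases eq_or_ne w 1 with rfl | hne
    · exact nn_one cs t
    · obtain ⟨i, hi⟩ := cs.exists_leftDescent_of_ne_one hne
      rw [CoxeterSystem.IsLeftDescent] at hi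
      set w₁ := σ i * w with hw₁
      have hww : w = σ i * w₁ := by
        rw [hw₁, ← mul_assoc, cs.simple_mul_simple_self, one_mul]
      have hcoc : nn cs w t = nn cs w₁ t + nn cs (σ i) (w₁ * t * w₁⁻¹) := by
        conv_lhs => rw [hww]
        exact nn_mul cs (σ i) w₁ t
      by_cases hc : w₁ * t * w₁⁻¹ = σ i
      · exfalso
        have hwt : w * t = w₁ := by
          rw [hww]
          have : w₁ * t = σ i * w₁ := by
            rw [← hc]; group
          rw [mul_assoc, this, ← mul_assoc, cs.simple_mul_simple_self, one_mul]
        rw [hwt] at hlt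
        omega
      · have hasc : ℓ w₁ < ℓ (w₁ * t) := by
          by_contra hcon
          push_neg at hcon
          have hne' : ℓ (w₁ * t) ≠ ℓ w₁ := CoxeterSystem.IsReflection.length_mul_left_ne ht w₁
          have h4 : ℓ (w₁ * t) < ℓ w₁ := lt_of_le_of_ne hcon hne'
          have h5 : ℓ (w * t) ≤ ℓ (w₁ * t) + 1 := by
            rw [hww, mul_assoc]
            have := cs.length_simple_mul (w₁ * t) i
            omega
          omega
        have h6 := ih (ℓ w₁) (by omega) w₁ t ht rfl hasc
        rw [hcoc, h6, nn_simple, if_neg hc, add_zero]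

lemma nn_eq_one_iff {t : W} (ht : cs.IsReflection t) (w : W) :
    nn cs w t = 1 ↔ ℓ (w * t) < ℓ w := by
  constructor
  · intro h1
    by_contra hcon
    push_neg at hcon
    have hne' : ℓ (w * t) ≠ ℓ w := CoxeterSystem.IsReflection.length_mul_left_ne ht w
    have hasc : ℓ w < ℓ (w * t) := lt_of_le_of_ne hcon (Ne.symm hne')
    have := nn_eq_zero_of_ascent cs (ℓ w) w t ht rfl hasc
    rw [this] at h1
    exact absurd h1 (by decide)
  · intro hlt
    have hasc : ℓ (w * t) < ℓ ((w * t) * t) := by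
      rw [mul_assoc, CoxeterSystem.IsReflection.mul_self ht, mul_one]
      exact hlt
    have h0 : nn cs (w * t) t = 0 := nn_eq_zero_of_ascent cs _ _ t ht rfl hasc
    have hcoc : nn cs (w * t) t = nn cs t t + nn cs w (t * t * t⁻¹) := nn_mul cs w t t
    rw [CoxeterSystem.IsReflection.mul_self ht, one_mul,
      CoxeterSystem.IsReflection.inv ht] at hcoc
    rw [h0, nn_refl_self cs ht] at hcoc
    have key : ∀ a : ZMod 2, 0 = 1 + a → a = 1 := by decide
    exact key _ hcoc

end CoxAux3

namespace CoxAux4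
open CoxeterSystem List CoxAux CoxAux2 CoxAux3

variable {M : CoxeterMatrix B} (cs : CoxeterSystem M W)

local prefix:100 "ℓ" => cs.length
local prefix:100 "π" => cs.wordProd
local prefix:100 "σ" => cs.simple
local prefix:100 "ris" => cs.rightInvSeq

/-- Strong exchange property. -/
theorem strong_exchange (ω : List B) {t : W} (ht : cs.IsReflection t)
    (hlt : ℓ (π ω * t) < ℓ (π ω)) :
    ∃ j < ω.length, π ω * t = π (ω.eraseIdx j) := by
  classical
  have h1 : nn cs (π ω) t = 1 := (nn_eq_one_iff cs ht (π ω)).mpr hlt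
  rw [nn_wordProd] at h1
  have hcnt : (ris ω).count t ≠ 0 := by
    intro h0
    rw [h0] at h1
    exact absurd h1 (by decide)
  have hmem : t ∈ ris ω := List.count_pos_iff.mp (Nat.pos_of_ne_zero hcnt)
  obtain ⟨j, hj, hget⟩ := List.getElem_of_mem hmem
  have hjlen : j < ω.length := by
    rwa [cs.length_rightInvSeq] at hj
  refine ⟨j, hjlen, ?_⟩
  have hgetD : (ris ω).getD j 1 = t := by
    rw [List.getD_eq_getElem _ _ hj, hget]
  rw [← hgetD]
  exact cs.wordProd_mul_getD_rightInvSeq ω j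

end CoxAux4

/-- `t` is a reflection of the Coxeter system `cs`, i.e. a conjugate of a simple reflection. -/
def IsCoxReflection {M : CoxeterMatrix B} (cs : CoxeterSystem M W) (t : W) : Prop :=
  ∃ (g : W) (i : B), t = g * cs.simple i * g⁻¹

/-- One step in the Bruhat order: multiply on the right by a reflection, increasing length. -/
def BruhatStep {M : CoxeterMatrix B} (cs : CoxeterSystem M W) (u w : W) : Prop :=
  cs.length u < cs.length w ∧ ∃ t : W, IsCoxReflection cs t ∧ w = u * t

/-- The Bruhat order on a Coxeter group: reflexive-transitive closure of `BruhatStep`. -/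
def BruhatLE {M : CoxeterMatrix B} (cs : CoxeterSystem M W) : W → W → Prop :=
  Relation.ReflTransGen (BruhatStep cs)

namespace CoxAux5
open CoxeterSystem List CoxAux CoxAux2 CoxAux3 CoxAux4

variable {M : CoxeterMatrix B} (cs : CoxeterSystem M W)

local prefix:100 "ℓ" => cs.length
local prefix:100 "π" => cs.wordProd
local prefix:100 "σ" => cs.simple

lemma isCoxReflection_iff (t : W) : IsCoxReflection cs t ↔ cs.IsReflection t := Iff.rfl

lemma bruhatLE_refl (w : W) : BruhatLE cs w w := Relation.ReflTransGen.refl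

lemma bruhatLE_trans {u v w : W} (h1 : BruhatLE cs u v) (h2 : BruhatLE cs v w) :
    BruhatLE cs u w := Relation.ReflTransGen.trans h1 h2

lemma bruhatLE_of_step {u w : W} (h : BruhatStep cs u w) : BruhatLE cs u w :=
  Relation.ReflTransGen.single h

/-- if `ℓ(u) < ℓ(u t)` for a reflection `t`, then `u ≤ u t`. -/
lemma bruhatLE_mul_refl {u t : W} (ht : cs.IsReflection t) (h : ℓ u < ℓ (u * t)) :
    BruhatLE cs u (u * t) :=
  bruhatLE_of_step cs ⟨h, t, ht, rfl⟩

/-- if `ℓ(u t) < ℓ(u)` for a reflection `t`, then `u t ≤ u`. -/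
lemma bruhatLE_mul_refl' {u t : W} (ht : cs.IsReflection t) (h : ℓ (u * t) < ℓ u) :
    BruhatLE cs (u * t) u := by
  have : u = (u * t) * t := by
    rw [mul_assoc, CoxeterSystem.IsReflection.mul_self ht, mul_one]
  refine bruhatLE_of_step cs ⟨h, t, ht, this⟩

lemma length_le_of_bruhatLE {u w : W} (h : BruhatLE cs u w) : ℓ u ≤ ℓ w := by
  induction h with
  | refl => exact le_refl _
  | tail _ hstep ih => exact le_trans ih (le_of_lt hstep.1)

end CoxAux5

namespace CoxAux6
open CoxeterSystem List CoxAux CoxAux2 CoxAux3 CoxAux4 CoxAux5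

variable {M : CoxeterMatrix B} (cs : CoxeterSystem M W)

local prefix:100 "ℓ" => cs.length
local prefix:100 "π" => cs.wordProd
local prefix:100 "σ" => cs.simple

/-- The lifting property statement up to length `n`. -/
def LiftProp (n : ℕ) : Prop := ∀ w : W, ℓ w ≤ n → ∀ u : W, ∀ i : B, BruhatLE cs u w →
  (ℓ w < ℓ (w * σ i) → BruhatLE cs (u * σ i) (w * σ i)) ∧
  (ℓ (w * σ i) < ℓ w → BruhatLE cs (u * σ i) w)

/-- The (one-sided) subword property statement up to word length `n`. -/
def SubProp (n : ℕ) : Prop := ∀ ω' : List B, cs.IsReduced ω' → ω'.length ≤ n →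
  ∀ μ : List B, μ.Sublist ω' → BruhatLE cs (π μ) (π ω')

lemma lift_and_sub : ∀ n : ℕ, LiftProp cs n ∧ SubProp cs n := by
  intro n
  induction n using Nat.strong_induction_on with
  | _ n IH =>
    constructor
    · -- LiftProp n
      intro w hwn u i hu
      rcases Relation.ReflTransGen.cases_tail hu with heq | ⟨x, hux, hstep⟩
      · subst heq
        constructor
        · intro _
          exact bruhatLE_refl cs _
        · intro hdesc
          exact bruhatLE_mul_refl' cs (cs.isReflection_simple i) hdesc
      · obtain ⟨hlt, t, ht, rfl⟩ := hstep
        rw [isCoxReflection_iff] at ht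
        have hxn : ℓ x < n := lt_of_lt_of_le hlt hwn
        have ihx := (IH (ℓ x) hxn).1 x le_rfl u i hux
        constructor
        · -- A1 : ascent at w = x * t
          intro hasc
          by_cases hxs : ℓ x < ℓ (x * σ i)
          · have h1 : BruhatLE cs (u * σ i) (x * σ i) := ihx.1 hxs
            have h2 : BruhatLE cs (x * σ i) (x * t * σ i) := by
              have hrefl : cs.IsReflection (σ i * t * σ i) := by
                have := CoxeterSystem.IsReflection.conj ht (σ i)
                rwa [cs.inv_simple] at this
              have heq : x * t * σ i = (x * σ i) * (σ i * t * σ i) := by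
                simp only [← mul_assoc]
                rw [mul_assoc x (σ i) (σ i), cs.simple_mul_simple_self, mul_one]
              have hlen : ℓ (x * σ i) < ℓ (x * t * σ i) := by
                have e1 : ℓ (x * σ i) ≤ ℓ x + 1 := by
                  have := cs.length_mul_simple x i
                  omega
                omega
              rw [heq] at hlen ⊢
              exact bruhatLE_mul_refl cs hrefl hlen
            exact bruhatLE_trans cs h1 h2
          · have hxs' : ℓ (x * σ i) < ℓ x := by
              have := cs.length_mul_simple_ne x i
              omega
            have h1 : BruhatLE cs (u * σ i) x := ihx.2 hxs'
            have h2 : BruhatLE cs x (x * t) := bruhatLE_mul_refl cs ht hlt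
            have h3 : BruhatLE cs (x * t) (x * t * σ i) :=
              bruhatLE_mul_refl cs (cs.isReflection_simple i) hasc
            exact bruhatLE_trans cs h1 (bruhatLE_trans cs h2 h3)
        · -- A2 : descent at w = x * t
          intro hdesc
          by_cases hxs : ℓ (x * σ i) < ℓ x
          · have h1 : BruhatLE cs (u * σ i) x := ihx.2 hxs
            exact bruhatLE_trans cs h1 (bruhatLE_mul_refl cs ht hlt)
          · have hxsasc : ℓ x < ℓ (x * σ i) := by
              have := cs.length_mul_simple_ne x i
              omega
            have h1 : BruhatLE cs (u * σ i) (x * σ i) := ihx.1 hxsasc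
            -- show x * σ i ≤ x * t
            obtain ⟨ω₁, hω₁len, hω₁⟩ : ∃ ω : List B, ω.length = ℓ (x * t * σ i) ∧ x * t * σ i = π ω := by
                obtain ⟨ω, h1, h2⟩ := cs.exists_reduced_word (x * t * σ i)
                exact ⟨ω, by rw [h2]; exact h1.symm, h2⟩
            have hlw : ℓ (x * t * σ i) + 1 = ℓ (x * t) := by
              have := cs.length_mul_simple (x * t) i
              omega
            set ω' : List B := ω₁ ++ [i] with hω'
            have hπω' : π ω' = x * t := by
              rw [hω', cs.wordProd_append, cs.wordProd_singleton, ← hω₁, mul_assoc,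
                cs.simple_mul_simple_self, mul_one]
            have hω'red : cs.IsReduced ω' := by
              rw [CoxeterSystem.IsReduced, hπω', hω']
              simp only [List.length_append, List.length_singleton]
              omega
            have hxw : x = (x * t) * t := by
              rw [mul_assoc, CoxeterSystem.IsReflection.mul_self ht, mul_one]
            have hex : ∃ j < ω'.length, π ω' * t = π (ω'.eraseIdx j) := by
              apply strong_exchange cs ω' ht
              rw [hπω', ← hxw]
              exact hlt
            obtain ⟨j, hj, hje⟩ := hex
            rw [hπω', ← hxw] at hje
            have hxsw : BruhatLE cs (x * σ i) (x * t) := by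
              rcases Nat.lt_or_ge j ω₁.length with hjlt | hjge
              · -- erased inside ω₁
                have herase : ω'.eraseIdx j = ω₁.eraseIdx j ++ [i] := by
                  rw [hω', List.eraseIdx_append_of_lt_length hjlt]
                rw [herase, cs.wordProd_append, cs.wordProd_singleton] at hje
                have hxsi : x * σ i = π (ω₁.eraseIdx j) := by
                  rw [hje, mul_assoc, cs.simple_mul_simple_self, mul_one]
                have hsub : BruhatLE cs (π (ω₁.eraseIdx j)) (π ω₁) := by
                  have hlevel : ω₁.length < n := by
                    omega
                  exact (IH ω₁.length hlevel).2 ω₁ (by rw [CoxeterSystem.IsReduced, ← hω₁, hω₁len])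
                    le_rfl _ (List.eraseIdx_sublist ω₁ j)
                rw [hxsi]
                refine bruhatLE_trans cs hsub ?_
                rw [← hω₁]
                exact bruhatLE_mul_refl' cs (cs.isReflection_simple i) hdesc
              · -- erased the last letter
                have hjeq : j = ω₁.length := by
                  rw [hω'] at hj
                  simp only [List.length_append, List.length_singleton] at hj
                  omega
                have herase : ω'.eraseIdx j = ω₁ := by
                  rw [hω', hjeq, List.eraseIdx_append_of_length_le le_rfl]
                  simp
                rw [herase, ← hω₁] at hje
                have hxsi2 : x * σ i = x * t := by
                  conv_lhs => rw [hje]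
                  rw [mul_assoc, cs.simple_mul_simple_self, mul_one]
                rw [hxsi2]
                exact bruhatLE_refl cs _
            exact bruhatLE_trans cs h1 hxsw
    · -- SubProp n
      intro ω' hred hlen μ hsub
      rcases List.eq_nil_or_concat' ω' with rfl | ⟨l, a, rfl⟩
      · rw [List.sublist_nil.mp hsub]
        exact bruhatLE_refl cs _
      · have hlred : cs.IsReduced l := by
          have := hred.take l.length
          rwa [List.take_left] at this
        have hπ : π (l ++ [a]) = π l * σ a := by
          rw [cs.wordProd_append, cs.wordProd_singleton]
        have hlasc : ℓ (π l) < ℓ (π l * σ a) := by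
          have h1 : ℓ (π l) = l.length := hlred
          have h2 : ℓ (π (l ++ [a])) = l.length + 1 := by
            rw [hred]
            simp
          rw [hπ] at h2
          omega
        have hllen : l.length < n := by
          simp only [List.length_append, List.length_singleton] at hlen
          omega
        rcases List.sublist_append_iff.mp hsub with ⟨μ₁, μ₂, rfl, hμ₁, hμ₂⟩
        rcases List.sublist_singleton.mp hμ₂ with rfl | rfl
        · have h1 : BruhatLE cs (π μ₁) (π l) := (IH l.length hllen).2 l hlred le_rfl μ₁ hμ₁
          have h2 : BruhatLE cs (π l) (π (l ++ [a])) := by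
            rw [hπ]
            exact bruhatLE_mul_refl cs (cs.isReflection_simple a) hlasc
          rw [List.append_nil]
          exact bruhatLE_trans cs h1 h2
        · have h1 : BruhatLE cs (π μ₁) (π l) := (IH l.length hllen).2 l hlred le_rfl μ₁ hμ₁
          have h2 : BruhatLE cs (π μ₁ * σ a) (π l * σ a) :=
            ((IH l.length hllen).1 (π l) (le_of_eq hlred) (π μ₁) a h1).1 hlasc
          rw [cs.wordProd_append, cs.wordProd_singleton, hπ]
          exact h2

end CoxAux6

namespace CoxAux7
open CoxeterSystem List CoxAux CoxAux2 CoxAux3 CoxAux4 CoxAux5 CoxAux6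

variable {M : CoxeterMatrix B} (cs : CoxeterSystem M W)

local prefix:100 "ℓ" => cs.length
local prefix:100 "π" => cs.wordProd
local prefix:100 "σ" => cs.simple

lemma wordProd_mem_closure {J : Set B} (ω : List B) (hω : ∀ b ∈ ω, b ∈ J) :
    π ω ∈ Subgroup.closure (cs.simple '' J) := by
  induction ω with
  | nil =>
      rw [cs.wordProd_nil]
      exact one_mem _
  | cons i ω ih =>
      rw [cs.wordProd_cons]
      refine mul_mem ?_ (ih fun b hb => hω b (List.mem_cons_of_mem i hb))
      exact Subgroup.subset_closure ⟨i, hω i (List.mem_cons_self), rfl⟩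

lemma exists_word_of_mem_closure {J : Set B} {r : W}
    (hr : r ∈ Subgroup.closure (cs.simple '' J)) :
    ∃ ω : List B, (∀ b ∈ ω, b ∈ J) ∧ π ω = r := by
  induction hr using Subgroup.closure_induction with
  | mem x hx =>
      obtain ⟨i, hi, rfl⟩ := hx
      exact ⟨[i], by simpa using hi, cs.wordProd_singleton i⟩
  | one => exact ⟨[], by simp, cs.wordProd_nil⟩
  | mul x y _ _ ihx ihy =>
      obtain ⟨ω₁, h₁, rfl⟩ := ihx
      obtain ⟨ω₂, h₂, rfl⟩ := ihy
      refine ⟨ω₁ ++ ω₂, ?_, cs.wordProd_append ω₁ ω₂⟩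
      intro b hb
      rcases List.mem_append.mp hb with h | h
      · exact h₁ b h
      · exact h₂ b h
  | inv x _ ihx =>
      obtain ⟨ω₁, h₁, rfl⟩ := ihx
      exact ⟨ω₁.reverse, fun b hb => h₁ b (List.mem_reverse.mp hb), cs.wordProd_reverse ω₁⟩

/-- Deletion property: every word contains a reduced word (with same letters)
for the same element. -/
lemma exists_reduced_subword : ∀ n (ω : List B), ω.length ≤ n →
    ∃ ω₂ : List B, (∀ b ∈ ω₂, b ∈ ω) ∧ cs.IsReduced ω₂ ∧ π ω₂ = π ω := by
  intro n
  induction n using Nat.strong_induction_on with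
  | _ n IH =>
    intro ω hlen
    by_cases hred : cs.IsReduced ω
    · exact ⟨ω, fun b hb => hb, hred, rfl⟩
    · -- find a descent position
      have hdesc : ∃ k < ω.length, ℓ (π (ω.take (k+1))) < ℓ (π (ω.take k)) := by
        by_contra hcon
        push_neg at hcon
        have hstep : ∀ k < ω.length, ℓ (π (ω.take (k+1))) = ℓ (π (ω.take k)) + 1 := by
          intro k hk
          have h1 := hcon k hk
          have htake : ω.take (k+1) = ω.take k ++ [ω[k]] := by
            rw [← List.take_concat_get hk]
            simp
          have := cs.length_mul_simple (π (ω.take k)) (ω[k])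
          rw [htake, cs.wordProd_append, cs.wordProd_singleton] at h1 ⊢
          omega
        have hall : ∀ k, k ≤ ω.length → ℓ (π (ω.take k)) = k := by
          intro k
          induction k with
          | zero => simp
          | succ k ihk =>
              intro hk
              rw [hstep k (by omega), ihk (by omega)]
        have : cs.IsReduced ω := by
          rw [CoxeterSystem.IsReduced]
          have := hall ω.length le_rfl
          rwa [List.take_length] at this
        exact hred this
      obtain ⟨k, hk, hkdesc⟩ := hdesc
      have htake : ω.take (k+1) = ω.take k ++ [ω[k]] := by
        rw [← List.take_concat_get hk]
        simp
      rw [htake, cs.wordProd_append, cs.wordProd_singleton] at hkdesc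
      obtain ⟨l, hl, hle⟩ := strong_exchange cs (ω.take k) (cs.isReflection_simple ω[k]) hkdesc
      set ω₁ : List B := (ω.take k).eraseIdx l ++ ω.drop (k+1) with hω₁
      have hπ : π ω₁ = π ω := by
        rw [hω₁, cs.wordProd_append, ← hle]
        conv_rhs => rw [← List.take_append_drop k ω]
        rw [cs.wordProd_append]
        rw [List.drop_eq_getElem_cons hk, cs.wordProd_cons]
        group
      have hlen₁ : ω₁.length < ω.length := by
        rw [hω₁]
        rw [List.length_append, List.length_eraseIdx]
        have h2 : l < (ω.take k).length := hl
        rw [if_pos h2]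
        have h3 : (ω.take k).length = k := by
          rw [List.length_take]
          omega
        rw [h3, List.length_drop]
        omega
      have hmem : ∀ b ∈ ω₁, b ∈ ω := by
        intro b hb
        rw [hω₁] at hb
        rcases List.mem_append.mp hb with h | h
        · exact List.mem_of_mem_take (((ω.take k).eraseIdx_sublist l).mem h)
        · exact List.mem_of_mem_drop h
      obtain ⟨ω₂, hmem₂, hred₂, hπ₂⟩ := IH ω₁.length (by omega) ω₁ le_rfl
      exact ⟨ω₂, fun b hb => hmem b (hmem₂ b hb), hred₂, by rw [hπ₂, hπ]⟩

end CoxAux7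

namespace CoxAux8
open CoxeterSystem List CoxAux CoxAux2 CoxAux3 CoxAux4 CoxAux5 CoxAux6 CoxAux7

variable {M : CoxeterMatrix B} (cs : CoxeterSystem M W)

local prefix:100 "ℓ" => cs.length
local prefix:100 "π" => cs.wordProd
local prefix:100 "σ" => cs.simple

/-- Length additivity for minimal coset representatives: if `x` has minimal length in
`x * W_J`, then `ℓ(x u) = ℓ(x) + ℓ(u)` for `u ∈ W_J` with reduced word `κ` over `J`. -/
lemma min_coset_additive {J : Set B} {x : W}
    (hmin : ∀ g ∈ Subgroup.closure (cs.simple '' J), ℓ x ≤ ℓ (x * g)) :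
    ∀ n (κ : List B), κ.length ≤ n → (∀ b ∈ κ, b ∈ J) → cs.IsReduced κ →
      ℓ (x * π κ) = ℓ x + κ.length := by
  intro n
  induction n using Nat.strong_induction_on with
  | _ n IH =>
    intro κ hκn hκJ hκred
    rcases List.eq_nil_or_concat' κ with rfl | ⟨κ₁, i, rfl⟩
    · simp [cs.wordProd_nil]
    · have hκ₁J : ∀ b ∈ κ₁, b ∈ J := fun b hb => hκJ b (by simp [hb])
      have hiJ : i ∈ J := hκJ i (by simp)
      have hκ₁red : cs.IsReduced κ₁ := by
        have := hκred.take κ₁.length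
        rwa [List.take_left] at this
      have hκ₁n : κ₁.length < n := by
        simp only [List.length_append, List.length_singleton] at hκn
        omega
      have ih1 : ℓ (x * π κ₁) = ℓ x + κ₁.length := IH κ₁.length hκ₁n κ₁ le_rfl hκ₁J hκ₁red
      have hπκ : π (κ₁ ++ [i]) = π κ₁ * σ i := by
        rw [cs.wordProd_append, cs.wordProd_singleton]
      rw [hπκ, ← mul_assoc]
      simp only [List.length_append, List.length_singleton]
      -- suppose not; derive contradiction
      by_contra hcon
      have hdesc : ℓ (x * π κ₁ * σ i) < ℓ (x * π κ₁) := by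
        have := cs.length_mul_simple (x * π κ₁) i
        omega
      obtain ⟨ρ, hρlen, hρ⟩ : ∃ ω : List B, ω.length = ℓ x ∧ x = π ω := by
          obtain ⟨ω, h1, h2⟩ := cs.exists_reduced_word x
          exact ⟨ω, by rw [h2]; exact h1.symm, h2⟩
      have hword : π (ρ ++ κ₁) = x * π κ₁ := by
        rw [cs.wordProd_append, ← hρ]
      obtain ⟨l, hl, hle⟩ := strong_exchange cs (ρ ++ κ₁) (cs.isReflection_simple i)
        (by rw [hword]; exact hdesc)
      rw [hword] at hle
      rcases Nat.lt_or_ge l ρ.length with hlρ | hlρ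
      · -- erased inside ρ : contradicts minimality
        have herase : (ρ ++ κ₁).eraseIdx l = ρ.eraseIdx l ++ κ₁ :=
          List.eraseIdx_append_of_lt_length hlρ κ₁
        rw [herase, cs.wordProd_append] at hle
        set y := π (ρ.eraseIdx l) with hy
        have hxy : x * (π κ₁ * σ i * (π κ₁)⁻¹) = y := by
          have h7 : x * π κ₁ * σ i = y * π κ₁ := hle
          have h8 := congrArg (fun z => z * (π κ₁)⁻¹) h7
          simpa [mul_assoc] using h8
        have hmemC : π κ₁ * σ i * (π κ₁)⁻¹ ∈ Subgroup.closure (cs.simple '' J) := by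
          refine mul_mem (mul_mem (wordProd_mem_closure cs κ₁ hκ₁J)
            (Subgroup.subset_closure ⟨i, hiJ, rfl⟩)) ?_
          exact inv_mem (wordProd_mem_closure cs κ₁ hκ₁J)
        have hylen : ℓ y ≤ ℓ x - 1 := by
          have h1 : ℓ y ≤ (ρ.eraseIdx l).length := cs.length_wordProd_le _
          have h2 : (ρ.eraseIdx l).length = ρ.length - 1 := by
            rw [List.length_eraseIdx, if_pos hlρ]
          omega
        have hxpos : 0 < ℓ x := by omega
        have := hmin _ hmemC
        rw [hxy] at this
        omega
      · -- erased inside κ₁ : contradicts reducedness of κ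
        have herase : (ρ ++ κ₁).eraseIdx l = ρ ++ κ₁.eraseIdx (l - ρ.length) :=
          List.eraseIdx_append_of_length_le hlρ κ₁
        rw [herase, cs.wordProd_append, ← hρ] at hle
        have hcancel : π κ₁ * σ i = π (κ₁.eraseIdx (l - ρ.length)) := by
          rw [mul_assoc] at hle
          exact mul_left_cancel hle
        have hml : l - ρ.length < κ₁.length := by
          rw [List.length_append] at hl
          omega
        have hlenb : (κ₁.eraseIdx (l - ρ.length)).length = κ₁.length - 1 := by
          rw [List.length_eraseIdx, if_pos hml]
        have h5 : ℓ (π (κ₁ ++ [i])) ≤ κ₁.length - 1 := by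
          rw [hπκ, hcancel]
          exact le_trans (cs.length_wordProd_le _) (le_of_eq hlenb)
        have h4 : ℓ (π (κ₁ ++ [i])) = κ₁.length + 1 := by
          have h6 := hκred
          rw [CoxeterSystem.IsReduced] at h6
          simpa using h6
        omega

end CoxAux8

namespace CoxAux9
open CoxeterSystem List CoxAux CoxAux2 CoxAux3 CoxAux4 CoxAux5 CoxAux6 CoxAux7 CoxAux8

variable {M : CoxeterMatrix B} (cs : CoxeterSystem M W)

local prefix:100 "ℓ" => cs.length
local prefix:100 "π" => cs.wordProd
local prefix:100 "σ" => cs.simple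

/-- If `w` has no right descents in `J`, then `ℓ(w u) = ℓ(w) + ℓ(u)` for all `u ∈ W_J`. -/
lemma no_descent_additive {J : Set B} {w : W} (hw : ∀ j ∈ J, ℓ w < ℓ (w * σ j)) :
    ∀ κ : List B, (∀ b ∈ κ, b ∈ J) → cs.IsReduced κ → ℓ (w * π κ) = ℓ w + κ.length := by
  classical
  set C := Subgroup.closure (cs.simple '' J) with hC
  set S : Set ℕ := {m | ∃ g ∈ C, ℓ (w * g) = m} with hS
  have hSne : S.Nonempty := ⟨ℓ w, 1, one_mem _, by rw [mul_one]⟩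
  obtain ⟨g₀, hg₀C, hg₀⟩ : ∃ g ∈ C, ℓ (w * g) = sInf S := Nat.sInf_mem hSne
  set x := w * g₀ with hx
  have hxmin : ∀ g ∈ C, ℓ x ≤ ℓ (x * g) := by
    intro g hg
    have hmem : ℓ (x * g) ∈ S := ⟨g₀ * g, mul_mem hg₀C hg, by rw [← mul_assoc]⟩
    calc ℓ x = sInf S := hg₀
    _ ≤ ℓ (x * g) := Nat.sInf_le hmem
  have hPmin := min_coset_additive cs hxmin
  obtain ⟨τ, hτJ, hτ⟩ := exists_word_of_mem_closure cs (inv_mem hg₀C)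
  obtain ⟨τ', hτ'mem, hτ'red, hτ'π⟩ := exists_reduced_subword cs τ.length τ le_rfl
  have hτ'J : ∀ b ∈ τ', b ∈ J := fun b hb => hτJ b (hτ'mem b hb)
  have hwx2 : w = x * π τ' := by
    rw [hτ'π, hτ, hx, mul_assoc, mul_inv_cancel, mul_one]
  rcases List.eq_nil_or_concat' τ' with rfl | ⟨τ₁, i, rfl⟩
  · intro κ hκ hκred
    have hwxeq : w = x := by
      rw [hwx2, cs.wordProd_nil, mul_one]
    rw [hwxeq, hPmin κ.length κ le_rfl hκ hκred]
  · exfalso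
    have hi : i ∈ J := hτ'J i (by simp)
    have hτ₁J : ∀ b ∈ τ₁, b ∈ J := fun b hb => hτ'J b (by simp [hb])
    have hτ₁red : cs.IsReduced τ₁ := by
      have := hτ'red.take τ₁.length
      rwa [List.take_left] at this
    have h1 : ℓ w = ℓ x + (τ₁.length + 1) := by
      rw [hwx2, hPmin (τ₁ ++ [i]).length _ le_rfl hτ'J hτ'red]
      simp
    have h2 : w * σ i = x * π τ₁ := by
      rw [hwx2, cs.wordProd_append, cs.wordProd_singleton]
      rw [← mul_assoc, mul_assoc (x * π τ₁), cs.simple_mul_simple_self, mul_one]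
    have h3 : ℓ (w * σ i) = ℓ x + τ₁.length := by
      rw [h2, hPmin τ₁.length τ₁ le_rfl hτ₁J hτ₁red]
    have := hw i hi
    omega

/-- The greedy construction: keep exactly the letters that increase the length of the
left state. -/
noncomputable def greedy : W → List B → List B
  | _, [] => []
  | a, i :: ω =>
      if ℓ a < ℓ (a * σ i) then i :: greedy (a * σ i) ω else greedy a ω

lemma greedy_sublist : ∀ (ω : List B) (a : W), (greedy cs a ω).Sublist ω := by
  intro ω
  induction ω with
  | nil => intro a; simp [greedy]
  | cons i ω ih =>
      intro a
      rw [greedy]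
      by_cases h : ℓ a < ℓ (a * σ i)
      · rw [if_pos h]
        exact List.cons_sublist_cons.mpr (ih (a * σ i))
      · rw [if_neg h]
        exact List.sublist_cons_of_sublist i (ih a)

lemma greedy_length_additive : ∀ (ω : List B) (a : W),
    ℓ (a * π (greedy cs a ω)) = ℓ a + (greedy cs a ω).length := by
  intro ω
  induction ω with
  | nil => intro a; simp [greedy, cs.wordProd_nil]
  | cons i ω ih =>
      intro a
      rw [greedy]
      by_cases h : ℓ a < ℓ (a * σ i)
      · rw [if_pos h]
        rw [cs.wordProd_cons, ← mul_assoc, ih (a * σ i)]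
        have : ℓ (a * σ i) = ℓ a + 1 := by
          have := cs.length_mul_simple a i
          omega
        rw [this]
        simp only [List.length_cons]
        omega
      · rw [if_neg h]
        exact ih a

/-- The main greedy comparison: anything below `a` multiplied by the full word stays below
`a` multiplied by the greedy subword. -/
lemma greedy_dominates : ∀ (ω : List B) (a b : W), BruhatLE cs b a →
    BruhatLE cs (b * π ω) (a * π (greedy cs a ω)) := by
  intro ω
  induction ω with
  | nil =>
      intro a b h
      simpa [greedy, cs.wordProd_nil] using h
  | cons i ω ih =>
      intro a b h
      rw [greedy, cs.wordProd_cons, ← mul_assoc]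
      by_cases hasc : ℓ a < ℓ (a * σ i)
      · rw [if_pos hasc]
        have h1 : BruhatLE cs (b * σ i) (a * σ i) :=
          ((lift_and_sub cs (ℓ a)).1 a le_rfl b i h).1 hasc
        have h2 := ih (a * σ i) (b * σ i) h1
        rw [cs.wordProd_cons, ← mul_assoc]
        exact h2
      · have hdesc : ℓ (a * σ i) < ℓ a := by
          have := cs.length_mul_simple_ne a i
          omega
        rw [if_neg hasc]
        have h1 : BruhatLE cs (b * σ i) a :=
          ((lift_and_sub cs (ℓ a)).1 a le_rfl b i h).2 hdesc
        exact ih a (b * σ i) h1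

/-- Multiplying both sides of a Bruhat comparison by a word which is length-additive on the
right-hand side preserves the comparison. -/
lemma chain_lift : ∀ (κ : List B) (p q : W), BruhatLE cs p q →
    (∀ l ≤ κ.length, ℓ (q * π (κ.take l)) = ℓ q + l) →
    BruhatLE cs (p * π κ) (q * π κ) := by
  intro κ
  induction κ with
  | nil => intro p q h _; simpa [cs.wordProd_nil] using h
  | cons i κ ih =>
      intro p q h hadd
      have hasc : ℓ q < ℓ (q * σ i) := by
        have h1 := hadd 1 (by simp)
        simp only [List.take_succ_cons, List.take_zero] at h1
        rw [cs.wordProd_singleton] at h1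
        omega
      have h1 : BruhatLE cs (p * σ i) (q * σ i) :=
        ((lift_and_sub cs (ℓ q)).1 q le_rfl p i h).1 hasc
      have hq1 : ℓ (q * σ i) = ℓ q + 1 := by
        have := cs.length_mul_simple q i
        omega
      have h2 : BruhatLE cs (p * σ i * π κ) (q * σ i * π κ) := by
        refine ih (p * σ i) (q * σ i) h1 ?_
        intro l hl
        have h3 := hadd (l + 1) (by simp; omega)
        simp only [List.take_succ_cons] at h3
        rw [cs.wordProd_cons, ← mul_assoc] at h3
        omega
      rw [cs.wordProd_cons, ← mul_assoc, ← mul_assoc]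
      exact h2

end CoxAux9

/-- The length-additivity requirement in the definition of `⪯` on `Q_J` can be omitted:
if `v' ≤ v*r ≤ w*r ≤ w'` for some `r ∈ W_J`, then there is `r' ∈ W_J` with `v*r'`
length-additive and `v' ≤ v*r' ≤ w*r' ≤ w'`. -/
theorem QJle_omit_length_additive {M : CoxeterMatrix B} (cs : CoxeterSystem M W)
    (J : Set B) (v w v' w' r : W)
    (hw : ∀ j ∈ J, cs.length w < cs.length (w * cs.simple j))
    (hw' : ∀ j ∈ J, cs.length w' < cs.length (w' * cs.simple j))
    (hvw : BruhatLE cs v w) (hv'w' : BruhatLE cs v' w')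
    (hr : r ∈ Subgroup.closure (cs.simple '' J))
    (h1 : BruhatLE cs v' (v * r)) (h2 : BruhatLE cs (v * r) (w * r))
    (h3 : BruhatLE cs (w * r) w') :
    ∃ r' ∈ Subgroup.closure (cs.simple '' J),
      cs.length (v * r') = cs.length v + cs.length r' ∧
      BruhatLE cs v' (v * r') ∧ BruhatLE cs (v * r') (w * r') ∧
      BruhatLE cs (w * r') w' := by
  classical
  obtain ⟨ω₀, hω₀J, hω₀π⟩ := CoxAux7.exists_word_of_mem_closure cs hr
  obtain ⟨ω, hωmem, hωred, hωπ⟩ := CoxAux7.exists_reduced_subword cs ω₀.length ω₀ le_rfl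
  have hωJ : ∀ b ∈ ω, b ∈ J := fun b hb => hω₀J b (hωmem b hb)
  have hωr : cs.wordProd ω = r := by rw [hωπ, hω₀π]
  refine ⟨cs.wordProd (CoxAux9.greedy cs v ω), ?_, ?_, ?_, ?_, ?_⟩
  · exact CoxAux7.wordProd_mem_closure cs _ fun b hb =>
      hωJ b ((CoxAux9.greedy_sublist cs ω v).mem hb)
  · -- length additivity
    have hadd := CoxAux9.greedy_length_additive cs ω v
    have h1' : cs.length (v * cs.wordProd (CoxAux9.greedy cs v ω))
        ≤ cs.length v + cs.length (cs.wordProd (CoxAux9.greedy cs v ω)) :=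
      cs.length_mul_le v _
    have h2' : cs.length (cs.wordProd (CoxAux9.greedy cs v ω))
        ≤ (CoxAux9.greedy cs v ω).length := cs.length_wordProd_le _
    omega
  · -- v' ≤ v r'
    have hvr : BruhatLE cs (v * r) (v * cs.wordProd (CoxAux9.greedy cs v ω)) := by
      have := CoxAux9.greedy_dominates cs ω v v (CoxAux5.bruhatLE_refl cs v)
      rwa [hωr] at this
    exact CoxAux5.bruhatLE_trans cs h1 hvr
  · -- v r' ≤ w r'
    have hκred : cs.IsReduced (CoxAux9.greedy cs v ω) := by
      rw [CoxeterSystem.IsReduced]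
      have hadd := CoxAux9.greedy_length_additive cs ω v
      have h1' := cs.length_mul_le v (cs.wordProd (CoxAux9.greedy cs v ω))
      have h2' := cs.length_wordProd_le (CoxAux9.greedy cs v ω)
      omega
    refine CoxAux9.chain_lift cs _ v w hvw ?_
    intro l hl
    have htl : cs.IsReduced ((CoxAux9.greedy cs v ω).take l) := hκred.take l
    have htJ : ∀ b ∈ (CoxAux9.greedy cs v ω).take l, b ∈ J := fun b hb =>
      hωJ b ((CoxAux9.greedy_sublist cs ω v).mem (List.mem_of_mem_take hb))
    have hP := CoxAux9.no_descent_additive cs hw _ htJ htl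
    rw [hP, List.length_take]
    omega
  · -- w r' ≤ w'
    have hsub : BruhatLE cs (w * cs.wordProd (CoxAux9.greedy cs v ω)) (w * r) := by
      obtain ⟨ρ, hρlen, hρ⟩ : ∃ ω : List B, ω.length = cs.length w ∧ w = cs.wordProd ω := by
        obtain ⟨ω, h1, h2⟩ := cs.exists_reduced_word w
        exact ⟨ω, by rw [h2]; exact h1.symm, h2⟩
      have hbigred : cs.IsReduced (ρ ++ ω) := by
        rw [CoxeterSystem.IsReduced, cs.wordProd_append, ← hρ]
        have hP := CoxAux9.no_descent_additive cs hw ω hωJ hωred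
        rw [hP, List.length_append]
        omega
      have hμ : (ρ ++ CoxAux9.greedy cs v ω).Sublist (ρ ++ ω) :=
        (List.append_sublist_append_left ρ).mpr (CoxAux9.greedy_sublist cs ω v)
      have hS := (CoxAux6.lift_and_sub cs (ρ ++ ω).length).2 (ρ ++ ω) hbigred le_rfl
        (ρ ++ CoxAux9.greedy cs v ω) hμ
      rw [cs.wordProd_append, cs.wordProd_append, ← hρ, hωr] at hS
      exact hS
    exact CoxAux5.bruhatLE_trans cs hsub h3
end

section
/- Let W be a Coxeter group, w = s_{i₁}⋯s_{i_n} a reduced expression, and v ≤ w in Bruhat order. Then there exists a unique positive subexpression for v in this reduced word: a sequence v_(0) = id, v_(1), …, v_(n) = v such that for each j, either v_(j) = v_(j−1) or v_(j) = v_(j−1)s_{i_j}, and in every step v_(j−1) < v_(j−1)s_{i_j}. Moreover it is given inductively from the right by v_(j−1) = v_(j)s_{i_j} if v_(j)s_{i_j} < v_(j), and v_(j−1) = v_(j) otherwise. -/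
variable {B W : Type*} [Group W]

/-- `vs` is a positive subexpression for `v` inside the word `ω`. -/
def IsPositiveSubexpr {M : CoxeterMatrix B} (cs : CoxeterSystem M W)
    (ω : List B) (v : W) (vs : Fin (ω.length + 1) → W) : Prop :=
  vs 0 = 1 ∧ vs (Fin.last ω.length) = v ∧
    ∀ j : Fin ω.length,
      (vs j.succ = vs j.castSucc ∨ vs j.succ = vs j.castSucc * cs.simple (ω.get j)) ∧
      cs.length (vs j.castSucc) < cs.length (vs j.castSucc * cs.simple (ω.get j))

set_option linter.unusedSectionVars false

namespace MarshRietsch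

open CoxeterSystem List Classical

attribute [local instance] Classical.propDecidable

variable {M : CoxeterMatrix B} (cs : CoxeterSystem M W)

local prefix:100 "s" => cs.simple
local prefix:100 "π" => cs.wordProd
local prefix:100 "ℓ" => cs.length
local prefix:100 "ris" => cs.rightInvSeq

/-! ### counting occurrences -/

noncomputable def cnt (t : W) : List W → ℕ
  | [] => 0
  | x :: l => (if x = t then 1 else 0) + cnt t l

lemma cnt_append (t : W) (l₁ l₂ : List W) : cnt t (l₁ ++ l₂) = cnt t l₁ + cnt t l₂ := by
  induction l₁ with
  | nil => simp [cnt]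
  | cons x l ih => simp [cnt, ih]; ring

lemma mem_of_cnt_ne_zero {t : W} {l : List W} (h : cnt t l ≠ 0) : t ∈ l := by
  induction l with
  | nil => simp [cnt] at h
  | cons x l ih =>
    by_cases hx : x = t
    · simp [hx]
    · simp only [cnt, if_neg hx, Nat.zero_add] at h
      exact List.mem_cons_of_mem _ (ih h)

lemma ris_cons (i : B) (α : List B) :
    cs.rightInvSeq (i :: α) = ((π α)⁻¹ * s i * π α) :: cs.rightInvSeq α := rfl

/-! ### the permutation representation on `W × ZMod 2` -/

noncomputable def sigmaFun (i : B) : W × ZMod 2 → W × ZMod 2 :=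
  fun x => (s i * x.1 * s i, x.2 + if x.1 = s i then 1 else 0)

lemma sigmaFun_invol (i : B) (x : W × ZMod 2) : sigmaFun cs i (sigmaFun cs i x) = x := by
  obtain ⟨t, e⟩ := x
  simp only [sigmaFun]
  have h1 : s i * (s i * t * s i) * s i = t := by
    rw [← mul_assoc, ← mul_assoc, cs.simple_mul_simple_self i]
    simp [mul_assoc, cs.simple_mul_simple_self i]
  have h2 : (s i * t * s i = s i) ↔ (t = s i) := by
    constructor
    · intro h
      have := congrArg (fun z => s i * z * s i) h
      simpa [← mul_assoc, cs.simple_mul_simple_self i, mul_assoc,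
        cs.simple_mul_simple_cancel_left] using this
    · rintro rfl; simp [cs.simple_mul_simple_self i, mul_assoc,
        cs.simple_mul_simple_cancel_right]
  rw [h1]
  have hz : (1 + 1 : ZMod 2) = 0 := rfl
  by_cases ht : t = s i
  · simp only [h2, if_pos ht]
    refine Prod.ext rfl ?_
    show e + 1 + 1 = e
    rw [add_assoc, hz, add_zero]
  · simp only [h2, if_neg ht]
    simp

noncomputable def sigma (i : B) : Equiv.Perm (W × ZMod 2) :=
  ⟨sigmaFun cs i, sigmaFun cs i, sigmaFun_invol cs i, sigmaFun_invol cs i⟩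

lemma sigma_apply (i : B) (t : W) (e : ZMod 2) :
    sigma cs i (t, e) = (s i * t * s i, e + if t = s i then 1 else 0) := rfl

noncomputable def wperm (α : List B) : Equiv.Perm (W × ZMod 2) := (α.map (sigma cs)).prod

lemma wperm_nil : wperm cs ([] : List B) = 1 := rfl

lemma wperm_cons (i : B) (α : List B) : wperm cs (i :: α) = sigma cs i * wperm cs α := by
  simp [wperm]

lemma wperm_apply (α : List B) (t : W) (e : ZMod 2) :
    wperm cs α (t, e) = (π α * t * (π α)⁻¹, e + (cnt t (cs.rightInvSeq α) : ZMod 2)) := by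
  induction α generalizing e with
  | nil => simp [wperm_nil, cnt]
  | cons i α ih =>
    rw [wperm_cons, Equiv.Perm.mul_apply, ih, sigma_apply, ris_cons]
    have hcond : (π α * t * (π α)⁻¹ = s i) ↔ ((π α)⁻¹ * s i * π α = t) := by
      constructor
      · intro h; rw [← h]; group
      · intro h; rw [← h]; group
    rw [cs.wordProd_cons]
    refine Prod.ext ?_ ?_
    · show s i * (π α * t * (π α)⁻¹) * s i = (s i * π α) * t * ((s i) * π α)⁻¹
      rw [mul_inv_rev, cs.inv_simple]; group
    · show e + (cnt t (cs.rightInvSeq α) : ZMod 2) + (if π α * t * (π α)⁻¹ = s i then 1 else 0)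
        = e + ((cnt t (((π α)⁻¹ * s i * π α) :: cs.rightInvSeq α) : ℕ) : ZMod 2)
      have hh : cnt t (((π α)⁻¹ * s i * π α) :: cs.rightInvSeq α)
          = (if (π α)⁻¹ * s i * π α = t then 1 else 0) + cnt t (cs.rightInvSeq α) := rfl
      rw [hh]
      push_cast
      by_cases hc : π α * t * (π α)⁻¹ = s i
      · rw [if_pos hc, if_pos (hcond.mp hc)]; ring
      · rw [if_neg hc, if_neg (fun h => hc (hcond.mpr h))]; ring

/-! ### the dihedral computation -/

lemma drop_alternatingWord (i j : B) : ∀ (k n : ℕ),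
    (CoxeterSystem.alternatingWord i j n).drop k = CoxeterSystem.alternatingWord i j (n - k)
  | 0, n => by simp
  | (k+1), 0 => by simp [CoxeterSystem.alternatingWord]
  | (k+1), (n+1) => by
    rw [CoxeterSystem.alternatingWord_succ' i j n, List.drop_succ_cons,
      drop_alternatingWord i j k n]
    congr 1
    omega

lemma getD_ris_eq (ω : List B) (k : ℕ) (hk : k < ω.length) :
    (cs.rightInvSeq ω).getD k 1 = (π (ω.drop (k + 1)))⁻¹ * π (ω.drop k) := by
  rw [cs.getD_rightInvSeq]
  have hd : ω.drop k = ω[k] :: ω.drop (k + 1) := List.drop_eq_getElem_cons hk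
  rw [hd, cs.wordProd_cons]
  have : ω[k]? = some ω[k] := by
    rw [List.getElem?_eq_getElem hk]
  rw [this]
  simp [mul_assoc]

lemma qmul (i j : B) (l : ℕ) :
    π (CoxeterSystem.alternatingWord i j (l + M i j)) =
      π (CoxeterSystem.alternatingWord i j (M i j)) * π (CoxeterSystem.alternatingWord i j l) := by
  obtain ⟨m, hm⟩ : ∃ m, M i j = m := ⟨_, rfl⟩
  have hp : (s i * s j) ^ m = 1 := hm ▸ cs.simple_mul_simple_pow i j
  have hs : ∀ c : ℕ, s j * (s i * s j) ^ c * s j = ((s i * s j) ^ c)⁻¹ := by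
    intro c
    induction c with
    | zero => simp
    | succ c ih =>
      have : s j * (s i * s j) ^ (c + 1) * s j
          = (s j * (s i * s j) ^ c * s j) * (s j * (s i * s j) * s j) := by
        rw [pow_succ]
        simp [mul_assoc, cs.simple_mul_simple_cancel_left]
      rw [this, ih]
      have h2 : s j * (s i * s j) * s j = (s i * s j)⁻¹ := by
        rw [mul_inv_rev, cs.inv_simple, cs.inv_simple]
        simp [mul_assoc, cs.simple_mul_simple_cancel_left]
      rw [h2, ← mul_inv_rev, ← pow_succ']
  rw [hm]
  rw [cs.prod_alternatingWord_eq_mul_pow, cs.prod_alternatingWord_eq_mul_pow,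
    cs.prod_alternatingWord_eq_mul_pow]
  rcases Nat.even_or_odd' l with ⟨a, ha | ha⟩ <;> rcases Nat.even_or_odd' m with ⟨b, hb | hb⟩ <;>
    subst ha hb
  · have e1 : Even (2 * a + 2 * b) := ⟨a + b, by ring⟩
    have e2 : Even (2 * b) := ⟨b, by ring⟩
    have e3 : Even (2 * a) := ⟨a, by ring⟩
    have d1 : (2 * a + 2 * b) / 2 = a + b := by omega
    have d2 : (2 * b) / 2 = b := by omega
    have d3 : (2 * a) / 2 = a := by omega
    rw [if_pos e1, if_pos e2, if_pos e3, d1, d2, d3]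
    simp only [one_mul]
    rw [← pow_add, Nat.add_comm a b]
  · -- l = 2a, m = 2b+1
    have e1 : ¬ Even (2 * a + (2 * b + 1)) := by intro h; rcases h with ⟨r, hr⟩; omega
    have e2 : ¬ Even (2 * b + 1) := by intro h; rcases h with ⟨r, hr⟩; omega
    have e3 : Even (2 * a) := ⟨a, by ring⟩
    have d1 : (2 * a + (2 * b + 1)) / 2 = a + b := by omega
    have d2 : (2 * b + 1) / 2 = b := by omega
    have d3 : (2 * a) / 2 = a := by omega
    rw [if_neg e1, if_neg e2, if_pos e3, d1, d2, d3]
    simp only [one_mul]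
    rw [mul_assoc, ← pow_add, Nat.add_comm a b]
  · -- l = 2a+1, m = 2b
    have e1 : ¬ Even (2 * a + 1 + 2 * b) := by intro h; rcases h with ⟨r, hr⟩; omega
    have e2 : Even (2 * b) := ⟨b, by ring⟩
    have e3 : ¬ Even (2 * a + 1) := by intro h; rcases h with ⟨r, hr⟩; omega
    have d1 : (2 * a + 1 + 2 * b) / 2 = a + b := by omega
    have d2 : (2 * b) / 2 = b := by omega
    have d3 : (2 * a + 1) / 2 = a := by omega
    rw [if_neg e1, if_pos e2, if_neg e3, d1, d2, d3]
    simp only [one_mul]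
    -- goal : s j * p ^ (a + b) = p ^ b * (s j * p ^ a)
    have hinv : ((s i * s j) ^ b)⁻¹ = (s i * s j) ^ b := by
      have h4 : (s i * s j) ^ b * (s i * s j) ^ b = 1 := by
        rw [← pow_add]
        have h5 : b + b = 2 * b := by omega
        rw [h5, hp]
      exact inv_eq_of_mul_eq_one_right h4
    have hsw : s j * (s i * s j) ^ b = (s i * s j) ^ b * s j := by
      have h6 : s j * (s i * s j) ^ b = ((s i * s j) ^ b)⁻¹ * s j := by
        rw [← hs b]; simp [mul_assoc, cs.simple_mul_simple_cancel_right]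
      rw [h6, hinv]
    rw [← mul_assoc, ← hsw, mul_assoc, ← pow_add, Nat.add_comm b a]
  · -- l = 2a+1, m = 2b+1
    have e1 : Even (2 * a + 1 + (2 * b + 1)) := ⟨a + b + 1, by ring⟩
    have e2 : ¬ Even (2 * b + 1) := by intro h; rcases h with ⟨r, hr⟩; omega
    have e3 : ¬ Even (2 * a + 1) := by intro h; rcases h with ⟨r, hr⟩; omega
    have d1 : (2 * a + 1 + (2 * b + 1)) / 2 = a + b + 1 := by omega
    have d2 : (2 * b + 1) / 2 = b := by omega
    have d3 : (2 * a + 1) / 2 = a := by omega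
    rw [if_pos e1, if_neg e2, if_neg e3, d1, d2, d3]
    simp only [one_mul]
    -- goal : p ^ (a+b+1) = (s j * p ^ b) * (s j * p ^ a)
    have h7 : s j * (s i * s j) ^ b * (s j * (s i * s j) ^ a)
        = (s j * (s i * s j) ^ b * s j) * (s i * s j) ^ a := by
      simp [mul_assoc]
    rw [h7, hs b, eq_inv_mul_iff_mul_eq, ← pow_add]
    have h8 : b + (2 * a + 1 + (2 * b + 1)) / 2 = a + (2 * b + 1) := by omega
    rw [d1] at h8
    rw [h8, pow_add, hp, mul_one]

lemma ris_period (i j : B) (d : ℕ) :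
    (π (CoxeterSystem.alternatingWord i j (d + M i j)))⁻¹
        * π (CoxeterSystem.alternatingWord i j (d + M i j + 1)) =
    (π (CoxeterSystem.alternatingWord i j d))⁻¹
        * π (CoxeterSystem.alternatingWord i j (d + 1)) := by
  have h1 := qmul cs i j d
  have h2 := qmul cs i j (d + 1)
  have h3 : d + 1 + M i j = d + M i j + 1 := by omega
  rw [h3] at h2
  rw [h1, h2, mul_inv_rev, mul_assoc]
  congr 1
  rw [← mul_assoc, inv_mul_cancel, one_mul]

lemma ris_alt_eq (i j : B) (k : ℕ) (hk : k < M i j) :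
    (cs.rightInvSeq (CoxeterSystem.alternatingWord i j (2 * M i j))).getD k 1 =
    (cs.rightInvSeq (CoxeterSystem.alternatingWord i j (2 * M i j))).getD (k + M i j) 1 := by
  have hlen : (CoxeterSystem.alternatingWord i j (2 * M i j)).length = 2 * M i j :=
    CoxeterSystem.length_alternatingWord i j _
  rw [getD_ris_eq cs _ k (by omega), getD_ris_eq cs _ (k + M i j) (by omega)]
  rw [drop_alternatingWord, drop_alternatingWord, drop_alternatingWord, drop_alternatingWord]
  have e1 : 2 * M i j - (k + 1) = (M i j - (k + 1)) + M i j := by omega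
  have e2 : 2 * M i j - k = (M i j - (k + 1)) + M i j + 1 := by omega
  have e3 : 2 * M i j - (k + M i j + 1) = M i j - (k + 1) := by omega
  have e4 : 2 * M i j - (k + M i j) = (M i j - (k + 1)) + 1 := by omega
  rw [e1, e2, e3, e4]
  exact ris_period cs i j (M i j - (k + 1))

lemma cnt_ris_alt_even (i j : B) (t : W) :
    ∃ c, cnt t (cs.rightInvSeq (CoxeterSystem.alternatingWord i j (2 * M i j))) = 2 * c := by
  set L := cs.rightInvSeq (CoxeterSystem.alternatingWord i j (2 * M i j)) with hL
  have hlen : L.length = 2 * M i j := by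
    rw [hL, cs.length_rightInvSeq, CoxeterSystem.length_alternatingWord]
  have htd : L.take (M i j) = L.drop (M i j) := by
    apply List.ext_getElem
    · simp [hlen]; omega
    · intro k h1 h2
      rw [List.getElem_take, List.getElem_drop]
      have hk : k < M i j := by simp [hlen] at h1; omega
      have g1 : L[k] = L.getD k 1 := (List.getD_eq_getElem L 1 (by omega)).symm
      have g2 : L[M i j + k] = L.getD (k + M i j) 1 := by
        rw [List.getD_eq_getElem L 1 (by omega)]
        congr 1
        omega
      rw [g1, g2, hL]
      exact ris_alt_eq cs i j k hk
  refine ⟨cnt t (L.drop (M i j)), ?_⟩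
  calc cnt t L = cnt t (L.take (M i j) ++ L.drop (M i j)) := by rw [List.take_append_drop]
    _ = cnt t (L.take (M i j)) + cnt t (L.drop (M i j)) := cnt_append t _ _
    _ = 2 * cnt t (L.drop (M i j)) := by rw [htd]; ring

lemma aW_two_mul_succ (i j : B) (m : ℕ) :
    CoxeterSystem.alternatingWord i j (2 * (m + 1))
      = i :: j :: CoxeterSystem.alternatingWord i j (2 * m) := by
  have h1 : 2 * (m + 1) = (2 * m + 1) + 1 := by omega
  rw [h1, CoxeterSystem.alternatingWord_succ' i j (2 * m + 1),
    CoxeterSystem.alternatingWord_succ' i j (2 * m)]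
  have h2 : ¬ Even (2 * m + 1) := by intro h; rcases h with ⟨r, hr⟩; omega
  have h3 : Even (2 * m) := ⟨m, by omega⟩
  rw [if_neg h2, if_pos h3]

lemma wperm_alt (i j : B) (m : ℕ) :
    wperm cs (CoxeterSystem.alternatingWord i j (2 * m)) = (sigma cs i * sigma cs j) ^ m := by
  induction m with
  | zero => simp [CoxeterSystem.alternatingWord, wperm_nil]
  | succ m ih =>
    rw [aW_two_mul_succ, wperm_cons, wperm_cons, ih, pow_succ']
    rw [mul_assoc]

theorem liftable : M.IsLiftable (sigma cs) := by
  intro i j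
  rw [← wperm_alt cs i j (M i j)]
  apply Equiv.ext
  rintro ⟨t, e⟩
  rw [wperm_apply]
  have hπ : π (CoxeterSystem.alternatingWord i j (2 * M i j)) = 1 := by
    rw [cs.prod_alternatingWord_eq_mul_pow]
    have he : Even (2 * M i j) := ⟨M i j, by omega⟩
    have hd : 2 * M i j / 2 = M i j := by omega
    rw [if_pos he, hd, one_mul, cs.simple_mul_simple_pow]
  obtain ⟨c, hc⟩ := cnt_ris_alt_even cs i j t
  rw [hπ, hc]
  have : ((2 * c : ℕ) : ZMod 2) = 0 := by
    push_cast
    rw [show ((2 : ZMod 2) = 0) from rfl]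
    ring
  rw [this, add_zero]
  simp

/-! ### the parity cocycle and strong exchange -/

noncomputable def Phi : W →* Equiv.Perm (W × ZMod 2) := cs.lift ⟨sigma cs, liftable cs⟩

lemma Phi_simple (i : B) : Phi cs (s i) = sigma cs i := cs.lift_apply_simple (liftable cs) i

lemma Phi_wordProd (α : List B) : Phi cs (π α) = wperm cs α := by
  induction α with
  | nil => simp [wperm_nil, cs.wordProd_nil]
  | cons i α ih => rw [cs.wordProd_cons, map_mul, Phi_simple, ih, wperm_cons]

noncomputable def nn (w t : W) : ZMod 2 := (Phi cs w (t, 0)).2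

lemma nn_count {α : List B} {w : W} (hα : π α = w) (t : W) :
    (cnt t (cs.rightInvSeq α) : ZMod 2) = nn cs w t := by
  rw [nn, ← hα, Phi_wordProd, wperm_apply, zero_add]

lemma Phi_apply (w t : W) (e : ZMod 2) :
    Phi cs w (t, e) = (w * t * w⁻¹, e + nn cs w t) := by
  obtain ⟨α, rfl⟩ := cs.wordProd_surjective w
  rw [Phi_wordProd, wperm_apply, nn_count cs rfl]

lemma nn_mul (u v t : W) : nn cs (u * v) t = nn cs v t + nn cs u (v * t * v⁻¹) := by
  have h : Phi cs (u * v) (t, 0) = Phi cs u (Phi cs v (t, 0)) := by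
    rw [map_mul]; rfl
  rw [Phi_apply, Phi_apply, Phi_apply] at h
  have := congrArg Prod.snd h
  simpa using this

lemma nn_simple (i : B) (t : W) : nn cs (s i) t = if t = s i then 1 else 0 := by
  rw [nn, Phi_simple, sigma_apply, zero_add]

lemma nn_refl_word : ∀ (δ : List B) (i : B),
    nn cs (π δ * s i * (π δ)⁻¹) (π δ * s i * (π δ)⁻¹) = 1
  | [], i => by
    rw [cs.wordProd_nil]
    simp only [one_mul, inv_one, mul_one]
    rw [nn_simple, if_pos rfl]
  | j :: δ, i => by
    have ht : cs.IsReflection (π δ * s i * (π δ)⁻¹) := ⟨_, i, rfl⟩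
    set t := π δ * s i * (π δ)⁻¹ with hdef
    have htt : t * t = 1 := ht.mul_self
    have hti : t⁻¹ = t := ht.inv
    have key : π (j :: δ) * s i * (π (j :: δ))⁻¹ = s j * t * s j := by
      rw [cs.wordProd_cons, mul_inv_rev, cs.inv_simple, hdef]
      group
    rw [key]
    have hassoc : s j * t * s j = s j * (t * s j) := by rw [mul_assoc]
    rw [hassoc]
    rw [nn_mul cs (s j) (t * s j)]
    rw [nn_mul cs t (s j)]
    have hc1 : s j * (s j * t * s j) * (s j)⁻¹ = t := by
      rw [cs.inv_simple]
      calc s j * (s j * t * s j) * s j = (s j * s j) * t * (s j * s j) := by group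
        _ = t := by rw [cs.simple_mul_simple_self]; group
    have hc2 : (t * s j) * (s j * t * s j) * (t * s j)⁻¹ = t := by
      rw [mul_inv_rev, cs.inv_simple, hti]
      calc t * s j * (s j * t * s j) * (s j * t)
          = t * (s j * s j) * t * (s j * s j) * t := by group
        _ = t * t * t := by rw [cs.simple_mul_simple_self]; group
        _ = t := by rw [htt, one_mul]
    rw [← hassoc]
    rw [hc1, hc2]
    have hIH : nn cs t t = 1 := nn_refl_word δ i
    rw [hIH, nn_simple, nn_simple]
    have hiff : (s j * t * s j = s j) ↔ (t = s j) := by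
      constructor
      · intro h
        have := congrArg (fun z => s j * z * s j) h
        calc t = (s j * s j) * t * (s j * s j) := by rw [cs.simple_mul_simple_self]; group
          _ = s j * (s j * t * s j) * s j := by group
          _ = s j * s j * s j := by rw [h]
          _ = s j := by rw [cs.simple_mul_simple_self, one_mul]
      · intro h
        rw [h, cs.simple_mul_simple_self, one_mul]
    by_cases hts : t = s j
    · rw [if_pos hts, if_pos (hiff.mpr hts)]
      decide
    · rw [if_neg hts, if_neg (fun h => hts (hiff.mp h))]
      decide

lemma nn_refl {t : W} (ht : cs.IsReflection t) : nn cs t t = 1 := by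
  obtain ⟨g, i, rfl⟩ := ht
  obtain ⟨δ, rfl⟩ := cs.wordProd_surjective g
  exact nn_refl_word cs δ i

lemma nn_mul_refl {t : W} (ht : cs.IsReflection t) (w : W) :
    nn cs (w * t) t = nn cs w t + 1 := by
  rw [nn_mul cs w t]
  have h1 : t * t * t⁻¹ = t := by rw [ht.mul_self, one_mul, ht.inv]
  rw [h1, nn_refl cs ht, add_comm]

lemma length_lt_of_nn_eq_one {t : W} (ht : cs.IsReflection t) (w : W)
    (h : nn cs w t = 1) : ℓ (w * t) < ℓ w := by
  obtain ⟨ω, hred, hw⟩ := cs.exists_reduced_word' w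
  have hcnt : (cnt t (cs.rightInvSeq ω) : ZMod 2) = 1 := by
    rw [nn_count cs hw.symm, h]
  have hne : cnt t (cs.rightInvSeq ω) ≠ 0 := by
    intro h0
    rw [h0] at hcnt
    simp at hcnt
  have hmem : t ∈ cs.rightInvSeq ω := mem_of_cnt_ne_zero hne
  have h2 := cs.isRightInversion_of_mem_rightInvSeq hred hmem
  rw [hw]
  exact h2.2

lemma nn_eq_one_iff {t : W} (ht : cs.IsReflection t) (w : W) :
    nn cs w t = 1 ↔ ℓ (w * t) < ℓ w := by
  constructor
  · exact length_lt_of_nn_eq_one cs ht w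
  · intro h
    by_contra hne
    have h0 : nn cs w t = 0 := by
      have h01 : ∀ x : ZMod 2, x = 0 ∨ x = 1 := by decide
      rcases h01 (nn cs w t) with h' | h'
      · exact h'
      · exact absurd h' hne
    have h1 : nn cs (w * t) t = 1 := by rw [nn_mul_refl cs ht, h0, zero_add]
    have h2 : ℓ (w * t * t) < ℓ (w * t) := length_lt_of_nn_eq_one cs ht (w * t) h1
    rw [mul_assoc, ht.mul_self, mul_one] at h2
    omega

lemma strong_exchange {t w : W} (ht : cs.IsReflection t) (hlt : ℓ (w * t) < ℓ w)
    (α : List B) (hα : π α = w) :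
    ∃ k < α.length, π (α.eraseIdx k) = w * t := by
  have h1 : nn cs w t = 1 := (nn_eq_one_iff cs ht w).mpr hlt
  have h2 : (cnt t (cs.rightInvSeq α) : ZMod 2) = 1 := by rw [nn_count cs hα, h1]
  have h3 : cnt t (cs.rightInvSeq α) ≠ 0 := by
    intro h0; rw [h0] at h2; simp at h2
  have hmem : t ∈ cs.rightInvSeq α := mem_of_cnt_ne_zero h3
  obtain ⟨k, hk, hkt⟩ := List.mem_iff_getElem.mp hmem
  rw [cs.length_rightInvSeq] at hk
  refine ⟨k, hk, ?_⟩
  rw [← cs.wordProd_mul_getD_rightInvSeq, hα]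
  congr 1
  rw [List.getD_eq_getElem _ 1 (by rw [cs.length_rightInvSeq]; exact hk)]
  exact hkt

/-! ### Bruhat order lemmas -/

lemma isCoxReflection_iff (t : W) : IsCoxReflection cs t ↔ cs.IsReflection t := Iff.rfl

lemma bruhat_length_le {v w : W} (h : BruhatLE cs v w) : ℓ v ≤ ℓ w := by
  induction h with
  | refl => exact le_rfl
  | tail _ hstep ih => exact ih.trans (le_of_lt hstep.1)

lemma bruhat_of_eq_one {v : W} (h : BruhatLE cs v 1) : v = 1 := by
  have := bruhat_length_le cs h
  rw [cs.length_one] at this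
  exact cs.length_eq_zero_iff.mp (Nat.le_zero.mp this)

lemma bruhat_step_of_refl {w t : W} (ht : cs.IsReflection t) (hlt : ℓ (w * t) < ℓ w) :
    BruhatLE cs (w * t) w := by
  apply Relation.ReflTransGen.single
  refine ⟨hlt, t, ht, ?_⟩
  rw [mul_assoc, ht.mul_self, mul_one]

lemma bruhat_mul_simple_left {w : W} (i : B) (hlt : ℓ w < ℓ (s i * w)) :
    BruhatLE cs w (s i * w) := by
  apply Relation.ReflTransGen.single
  refine ⟨hlt, w⁻¹ * s i * w, ⟨w⁻¹, i, by group⟩, by group⟩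

lemma zstep {x y : W} (h : BruhatStep cs x y) (i : B) :
    BruhatLE cs (s i * x) y ∨ BruhatLE cs (s i * x) (s i * y) := by
  obtain ⟨hlen, t, ht, rfl⟩ := h
  rw [isCoxReflection_iff] at ht
  rcases Nat.lt_or_ge (ℓ (s i * x)) (ℓ x) with hx | hx
  · -- s i * x ≤ x ≤ x * t
    left
    have hxx : x = (s i * x) * ((s i * x)⁻¹ * s i * (s i * x)) := by
      have h9 : (s i * x) * ((s i * x)⁻¹ * s i * (s i * x)) = s i * (s i * x) := by group
      rw [h9, cs.simple_mul_simple_cancel_left]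
    have h1 : BruhatLE cs (s i * x) x :=
      Relation.ReflTransGen.single ⟨hx, (s i * x)⁻¹ * s i * (s i * x), ⟨(s i * x)⁻¹, i, by rw [inv_inv]⟩, hxx⟩
    exact h1.trans (Relation.ReflTransGen.single ⟨hlen, t, ht, rfl⟩)
  · have hx' : ℓ x < ℓ (s i * x) :=
      lt_of_le_of_ne hx (fun h => (cs.length_simple_mul_ne x i) h.symm)
    rcases Nat.lt_or_ge (ℓ (s i * x * t)) (ℓ (s i * x)) with hy | hy
    · -- strong exchange forces s i * x = x * t
      left
      obtain ⟨ξ, hξred, hξ⟩ := cs.exists_reduced_word' x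
      have hπ : π (i :: ξ) = s i * x := by rw [cs.wordProd_cons, ← hξ]
      obtain ⟨k, hk, hke⟩ := strong_exchange cs ht hy (i :: ξ) hπ
      rcases k with _ | k
      · -- erase the first letter : x = s i * x * t
        simp only [List.eraseIdx_cons_zero] at hke
        rw [← hξ] at hke
        -- hke : x = s i * x * t
        have heq : s i * x = x * t := by
          calc s i * x = s i * (s i * x * t) := by rw [← hke]
            _ = s i * (s i * (x * t)) := by rw [mul_assoc]
            _ = x * t := cs.simple_mul_simple_cancel_left i
        rw [heq]
        exact Relation.ReflTransGen.refl
      · -- contradiction with lengths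
        exfalso
        simp only [List.eraseIdx_cons_succ] at hke
        rw [cs.wordProd_cons] at hke
        -- hke : s i * π (ξ.eraseIdx k) = s i * x * t
        have hxt : x * t = π (ξ.eraseIdx k) := by
          calc x * t = s i * (s i * (x * t)) := (cs.simple_mul_simple_cancel_left i).symm
            _ = s i * (s i * x * t) := by rw [mul_assoc]
            _ = s i * (s i * π (ξ.eraseIdx k)) := by rw [hke]
            _ = π (ξ.eraseIdx k) := cs.simple_mul_simple_cancel_left i
        have h1 : ℓ (x * t) ≤ (ξ.eraseIdx k).length := by
          rw [hxt]; exact cs.length_wordProd_le _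
        have hkl : k < ξ.length := by
          simp only [List.length_cons] at hk
          omega
        have h2 := List.length_eraseIdx_add_one hkl
        have h3 : ξ.length = ℓ x := by rw [hξ]; exact hξred.symm
        omega
    · -- step s i * x → s i * (x * t)
      right
      have hy' : ℓ (s i * x) < ℓ (s i * x * t) :=
        lt_of_le_of_ne hy (fun h => (ht.length_mul_left_ne (s i * x)) h.symm)
      rw [← mul_assoc]
      exact Relation.ReflTransGen.single ⟨hy', t, ht, rfl⟩

lemma zchain {x y : W} (h : BruhatLE cs x y) (i : B) :
    BruhatLE cs (s i * x) y ∨ BruhatLE cs (s i * x) (s i * y) := by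
  induction h with
  | refl => exact Or.inr Relation.ReflTransGen.refl
  | @tail b c _ hstep ih =>
    rcases ih with h1 | h1
    · exact Or.inl (h1.trans (Relation.ReflTransGen.single hstep))
    · rcases zstep cs hstep i with h2 | h2
      · exact Or.inl (h1.trans h2)
      · exact Or.inr (h1.trans h2)

lemma sublist_le : ∀ (ω : List B), cs.IsReduced ω → ∀ σ : List B, σ.Sublist ω →
    BruhatLE cs (π σ) (π ω)
  | [], _, σ, hσ => by
    rw [List.sublist_nil.mp hσ]
    exact Relation.ReflTransGen.refl
  | i :: ω', hred, σ, hσ => by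
    have hred' : cs.IsReduced ω' := by
      have := hred.drop 1
      simpa using this
    have hu : BruhatLE cs (π ω') (π (i :: ω')) := by
      rw [cs.wordProd_cons]
      apply bruhat_mul_simple_left
      have h1 : ℓ (π ω') = ω'.length := hred'
      have h2 : ℓ (s i * π ω') = ω'.length + 1 := by
        rw [← cs.wordProd_cons]
        have := hred
        rw [CoxeterSystem.IsReduced] at this
        simpa using this
      omega
    rcases List.sublist_cons_iff.mp hσ with h | ⟨r, rfl, hr⟩
    · exact (sublist_le ω' hred' σ h).trans hu
    · rw [cs.wordProd_cons, cs.wordProd_cons]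
      rcases zchain cs (sublist_le ω' hred' r hr) i with h1 | h1
      · exact h1.trans hu
      · exact h1

lemma deletion : ∀ (n : ℕ) (σ : List B), σ.length ≤ n →
    ∃ σ' : List B, σ'.Sublist σ ∧ cs.IsReduced σ' ∧ π σ' = π σ := by
  intro n
  induction n with
  | zero =>
    intro σ hσ
    rw [List.length_eq_zero_iff.mp (Nat.le_zero.mp hσ)]
    exact ⟨[], List.Sublist.refl _, by simp [CoxeterSystem.IsReduced], rfl⟩
  | succ n ih =>
    intro σ hσ
    by_cases hred : cs.IsReduced σ
    · exact ⟨σ, List.Sublist.refl _, hred, rfl⟩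
    · -- find minimal non-reduced prefix
      have hex : ∃ j, ¬ cs.IsReduced (σ.take (j + 1)) := by
        refine ⟨σ.length, ?_⟩
        rw [List.take_of_length_le (by omega)]
        exact hred
      let jm := Nat.find hex
      have hj1 : ¬ cs.IsReduced (σ.take (jm + 1)) := Nat.find_spec hex
      have hj2 : ∀ k, k < jm → cs.IsReduced (σ.take (k + 1)) := by
        intro k hk
        by_contra hcon
        have hle : jm ≤ k := Nat.find_le hcon
        omega
      have hjred : cs.IsReduced (σ.take jm) := by
        rcases Nat.eq_zero_or_pos jm with h0 | h0
        · rw [h0]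
          simp [CoxeterSystem.IsReduced]
        · have := hj2 (jm - 1) (by omega)
          have he : jm - 1 + 1 = jm := by omega
          rwa [he] at this
      have hjlt : jm < σ.length := by
        rcases Nat.lt_or_ge jm σ.length with h | h
        · exact h
        · exfalso
          apply hj1
          rw [List.take_of_length_le (by omega)]
          rw [List.take_of_length_le (by omega)] at hjred
          exact hjred
      -- σ.take (jm+1) = σ.take jm ++ [σ[jm]]
      have htake : σ.take (jm + 1) = σ.take jm ++ [σ.get ⟨jm, hjlt⟩] := by
        rw [List.take_succ]
        congr 1
        rw [List.getElem?_eq_getElem hjlt]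
        rfl
      set x := π (σ.take jm) with hx
      set c := σ.get ⟨jm, hjlt⟩ with hc
      have hlx : ℓ x = jm := by
        rw [hx]
        have := hjred
        rw [CoxeterSystem.IsReduced] at this
        rw [this, List.length_take]
        omega
      have hlxc : ℓ (x * s c) < ℓ x := by
        have h1 : ℓ (x * s c) ≠ jm + 1 := by
          intro hcon
          apply hj1
          rw [CoxeterSystem.IsReduced, htake, cs.wordProd_append, cs.wordProd_singleton, ← hx]
          rw [hcon, List.length_append, List.length_take]
          simp
          omega
        rcases cs.length_mul_simple x c with h | h
        · omega
        · omega
      obtain ⟨a, ha, hae⟩ := strong_exchange cs (cs.isReflection_simple c) hlxc (σ.take jm) rfl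
      -- new word
      set σ₂ := (σ.take jm).eraseIdx a ++ σ.drop (jm + 1) with hσ₂
      have hπ₂ : π σ₂ = π σ := by
        rw [hσ₂, cs.wordProd_append, hae]
        conv_rhs => rw [← List.take_append_drop (jm + 1) σ]
        rw [cs.wordProd_append, htake, cs.wordProd_append, cs.wordProd_singleton, ← hx]
      have hsub : σ₂.Sublist σ := by
        have s1 : ((σ.take jm).eraseIdx a).Sublist (σ.take jm) := List.eraseIdx_sublist _ _
        have s2 : (σ.take jm).Sublist (σ.take (jm + 1)) := by
          rw [htake]
          exact List.sublist_append_left _ _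
        have s3 : σ₂.Sublist (σ.take (jm + 1) ++ σ.drop (jm + 1)) :=
          List.Sublist.append (s1.trans s2) (List.Sublist.refl _)
        rwa [List.take_append_drop] at s3
      have hlen₂ : σ₂.length ≤ n := by
        rw [hσ₂, List.length_append]
        have l1 : a < (σ.take jm).length := ha
        have := List.length_eraseIdx_add_one l1
        rw [List.length_take] at *
        have l2 : (σ.drop (jm + 1)).length = σ.length - (jm + 1) := List.length_drop
        omega
      obtain ⟨σ', hs', hr', hπ'⟩ := ih σ₂ hlen₂
      exact ⟨σ', hs'.trans hsub, hr', by rw [hπ', hπ₂]⟩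

lemma exists_reduced_subword {ω : List B} (hred : cs.IsReduced ω) {v : W}
    (hv : BruhatLE cs v (π ω)) :
    ∃ σ : List B, σ.Sublist ω ∧ cs.IsReduced σ ∧ π σ = v := by
  induction hv using Relation.ReflTransGen.head_induction_on with
  | refl => exact ⟨ω, List.Sublist.refl _, hred, rfl⟩
  | head hstep _ ih =>
    rename_i a c _
    obtain ⟨σc, hsub, hcred, hπc⟩ := ih
    obtain ⟨hlt, t, htc, hct⟩ := hstep
    rw [isCoxReflection_iff] at htc
    have ha : a = c * t := by
      rw [hct, mul_assoc, htc.mul_self, mul_one]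
    have hlt' : ℓ (c * t) < ℓ c := by rw [← ha]; exact hlt
    obtain ⟨k, hk, hke⟩ := strong_exchange cs htc hlt' σc hπc
    obtain ⟨σ', hs', hr', hπ'⟩ := deletion cs (σc.eraseIdx k).length _ le_rfl
    refine ⟨σ', (hs'.trans (List.eraseIdx_sublist _ _)).trans hsub, hr', ?_⟩
    rw [hπ', hke, ← ha]

lemma sublist_concat_cases {σ ω' : List B} {i : B} (h : σ.Sublist (ω' ++ [i])) :
    σ.Sublist ω' ∨ ∃ σ', σ = σ' ++ [i] ∧ σ'.Sublist ω' := by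
  have h1 : σ.reverse.Sublist (i :: ω'.reverse) := by
    have := List.reverse_sublist.mpr h
    rwa [List.reverse_append, List.reverse_singleton] at this
  rcases List.sublist_cons_iff.mp h1 with h2 | ⟨r, hr, h2⟩
  · left
    have := List.reverse_sublist.mpr h2
    simpa using this
  · right
    refine ⟨r.reverse, ?_, ?_⟩
    · have := congrArg List.reverse hr
      simpa using this
    · have := List.reverse_sublist.mpr h2
      simpa using this

lemma key_step {ω' : List B} {i : B} (hred : cs.IsReduced (ω' ++ [i])) {v : W}
    (hv : BruhatLE cs v (π (ω' ++ [i]))) :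
    BruhatLE cs (if ℓ (v * s i) < ℓ v then v * s i else v) (π ω') := by
  have hredω' : cs.IsReduced ω' := by
    have := hred.take ω'.length
    rwa [List.take_left] at this
  obtain ⟨σ, hsub, hσred, hπσ⟩ := exists_reduced_subword cs hred hv
  by_cases hlt : ℓ (v * s i) < ℓ v
  · rw [if_pos hlt]
    rcases sublist_concat_cases hsub with h | ⟨σ', rfl, hσ'⟩
    · obtain ⟨k, hk, hke⟩ := strong_exchange cs (cs.isReflection_simple i) hlt σ hπσ
      rw [← hke]
      exact sublist_le cs ω' hredω' _ ((List.eraseIdx_sublist _ _).trans h)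
    · have hv' : π σ' = v * s i := by
        rw [← hπσ, cs.wordProd_append, cs.wordProd_singleton,
          cs.simple_mul_simple_cancel_right]
      rw [← hv']
      exact sublist_le cs ω' hredω' σ' hσ'
  · rw [if_neg hlt]
    rcases sublist_concat_cases hsub with h | ⟨σ', rfl, hσ'⟩
    · rw [← hπσ]
      exact sublist_le cs ω' hredω' σ h
    · exfalso
      have hv' : π σ' = v * s i := by
        rw [← hπσ, cs.wordProd_append, cs.wordProd_singleton,
          cs.simple_mul_simple_cancel_right]
      have h1 : ℓ (v * s i) ≤ σ'.length := by
        rw [← hv']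
        exact cs.length_wordProd_le _
      have h2 : ℓ v = σ'.length + 1 := by
        have := hσred
        rw [CoxeterSystem.IsReduced, hπσ] at this
        rw [this, List.length_append, List.length_singleton]
      have h3 := cs.length_mul_simple v i
      omega

/-! ### the greedy sequence -/

noncomputable def desc (v : W) : List B → W
  | [] => v
  | i :: σ =>
    if ℓ (desc v σ * s i) < ℓ (desc v σ) then desc v σ * s i else desc v σ

lemma desc_le {ω : List B} (hred : cs.IsReduced ω) {v : W} (hv : BruhatLE cs v (π ω)) :
    ∀ k, k ≤ ω.length →
      BruhatLE cs (desc cs v (ω.drop (ω.length - k))) (π (ω.take (ω.length - k))) := by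
  intro k
  induction k with
  | zero =>
    intro _
    rw [Nat.sub_zero, List.drop_length, List.take_length]
    exact hv
  | succ k ih =>
    intro hk1
    have ihh := ih (by omega)
    set j := ω.length - (k + 1) with hj
    have hjlt : j < ω.length := by omega
    have hjk : ω.length - k = j + 1 := by omega
    rw [hjk] at ihh
    have hdropc : ω.drop j = ω.get ⟨j, hjlt⟩ :: ω.drop (j + 1) := by
      rw [List.drop_eq_getElem_cons hjlt]
      rfl
    have htakec : ω.take (j + 1) = ω.take j ++ [ω.get ⟨j, hjlt⟩] := by
      rw [List.take_succ]
      congr 1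
      rw [List.getElem?_eq_getElem hjlt]
      rfl
    rw [htakec] at ihh
    have hredt : cs.IsReduced (ω.take j ++ [ω.get ⟨j, hjlt⟩]) := by
      rw [← htakec]
      exact hred.take (j + 1)
    have := key_step cs hredt ihh
    rw [hdropc]
    show BruhatLE cs (desc cs v (ω.get ⟨j, hjlt⟩ :: ω.drop (j + 1))) (π (ω.take j))
    rw [desc]
    exact this

lemma desc_isPositiveSubexpr {ω : List B} (hred : cs.IsReduced ω) {v : W}
    (hv : BruhatLE cs v (π ω)) :
    IsPositiveSubexpr cs ω v (fun j => desc cs v (ω.drop j.val)) := by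
  refine ⟨?_, ?_, ?_⟩
  · show desc cs v (ω.drop ((0 : Fin (ω.length + 1)).val)) = 1
    have h0 : ((0 : Fin (ω.length + 1)).val) = 0 := rfl
    rw [h0, List.drop_zero]
    apply bruhat_of_eq_one cs
    have := desc_le cs hred hv ω.length le_rfl
    rw [Nat.sub_self, List.drop_zero, List.take_zero, cs.wordProd_nil] at this
    exact this
  · show desc cs v (ω.drop (Fin.last ω.length).val) = v
    rw [Fin.val_last, List.drop_length]
    rfl
  · intro j
    have hjlt : j.val < ω.length := j.isLt
    have hsucc : (j.succ : Fin (ω.length + 1)).val = j.val + 1 := rfl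
    have hcast : (j.castSucc : Fin (ω.length + 1)).val = j.val := rfl
    have hdropc : ω.drop j.val = ω.get j :: ω.drop (j.val + 1) := by
      rw [List.drop_eq_getElem_cons hjlt]
      rfl
    set u := desc cs v (ω.drop (j.val + 1)) with hu
    have hform : desc cs v (ω.drop j.val)
        = if ℓ (u * s (ω.get j)) < ℓ u then u * s (ω.get j) else u := by
      rw [hdropc, desc]
    show (desc cs v (ω.drop (j.val + 1)) = desc cs v (ω.drop j.val) ∨
          desc cs v (ω.drop (j.val + 1)) = desc cs v (ω.drop j.val) * s (ω.get j)) ∧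
        ℓ (desc cs v (ω.drop j.val)) < ℓ (desc cs v (ω.drop j.val) * s (ω.get j))
    rw [hform, ← hu]
    by_cases h : ℓ (u * s (ω.get j)) < ℓ u
    · rw [if_pos h]
      constructor
      · right
        rw [cs.simple_mul_simple_cancel_right]
      · rw [cs.simple_mul_simple_cancel_right]
        exact h
    · rw [if_neg h]
      constructor
      · left
        rfl
      · have := cs.length_mul_simple u (ω.get j)
        omega

lemma pos_rec {ω : List B} {v : W} {vs : Fin (ω.length + 1) → W}
    (h : IsPositiveSubexpr cs ω v vs) (j : Fin ω.length) :
    vs j.castSucc =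
      if ℓ (vs j.succ * s (ω.get j)) < ℓ (vs j.succ)
      then vs j.succ * s (ω.get j) else vs j.succ := by
  obtain ⟨_, _, hstep⟩ := h
  obtain ⟨hor, hpos⟩ := hstep j
  rcases hor with heq | heq
  · rw [heq, if_neg (by omega)]
  · rw [heq, cs.simple_mul_simple_cancel_right, if_pos hpos]

lemma pos_unique {ω : List B} {v : W} {vs vs' : Fin (ω.length + 1) → W}
    (h : IsPositiveSubexpr cs ω v vs) (h' : IsPositiveSubexpr cs ω v vs') : vs = vs' := by
  funext j
  induction j using Fin.reverseInduction with
  | last => rw [h.2.1, h'.2.1]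
  | cast j ih => rw [pos_rec cs h j, pos_rec cs h' j, ih]

end MarshRietsch

/-- Existence and uniqueness of the positive subexpression for `v ≤ w` inside a reduced
word for `w` (Marsh–Rietsch), together with its inductive construction from the right. -/
theorem positive_subexpression_existsUnique {M : CoxeterMatrix B} (cs : CoxeterSystem M W)
    (ω : List B) (hred : cs.IsReduced ω) (v : W)
    (hv : BruhatLE cs v (cs.wordProd ω)) :
    (∃! vs : Fin (ω.length + 1) → W, IsPositiveSubexpr cs ω v vs) ∧
    ∀ vs : Fin (ω.length + 1) → W, IsPositiveSubexpr cs ω v vs →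
      ∀ j : Fin ω.length,
        vs j.castSucc =
          if cs.length (vs j.succ * cs.simple (ω.get j)) < cs.length (vs j.succ)
          then vs j.succ * cs.simple (ω.get j) else vs j.succ := by
  constructor
  · refine ⟨fun j => MarshRietsch.desc cs v (ω.drop j.val),
      MarshRietsch.desc_isPositiveSubexpr cs hred hv, ?_⟩
    intro vs' h'
    exact MarshRietsch.pos_unique cs h' (MarshRietsch.desc_isPositiveSubexpr cs hred hv)
  · intro vs h j
    exact MarshRietsch.pos_rec cs h j
end

section
/- Let W be a Coxeter group, w ∈ W with reduced word (i₁,…,i_n), and v ≤ w. If the unique positive subexpression (v_(0),…,v_(n)) for v inside this reduced word satisfies v_(1) = s_{i₁}, then v ≰ s_{i₁}w. -/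
open List CoxeterSystem
set_option linter.unusedSectionVars false
set_option linter.unusedVariables false
set_option linter.unusedTactic false
set_option linter.unnecessarySimpa false

namespace CoxAux

variable {B W : Type*} [Group W] {M : CoxeterMatrix B} (cs : CoxeterSystem M W)

/-- The additive group (written multiplicatively) of functions `W → ZMod 2`. -/
abbrev NN (W : Type*) := W → Multiplicative (ZMod 2)

lemma NN.mul_self (f : NN W) : f * f = 1 := by
  funext t
  have : ∀ x : Multiplicative (ZMod 2), x * x = 1 := by decide
  exact this (f t)

open Classical in
/-- Indicator function of `x`. -/
noncomputable def delta (x : W) : NN W :=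
  fun t => Multiplicative.ofAdd (if t = x then 1 else 0)

/-- Conjugation action of `W` on `NN W`. -/
def conjAct (w : W) : NN W ≃* NN W where
  toFun f := fun t => f (w⁻¹ * t * w)
  invFun f := fun t => f (w * t * w⁻¹)
  left_inv f := by funext t; group
  right_inv f := by funext t; group
  map_mul' f g := rfl

def rho : W →* MulAut (NN W) where
  toFun := conjAct
  map_one' := by ext f t; simp [conjAct]
  map_mul' u v := by ext f t; simp [conjAct, mul_assoc]

lemma rho_apply (w : W) (f : NN W) (t : W) : rho w f t = f (w⁻¹ * t * w) := rfl

open Classical in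
lemma rho_delta (g x : W) : rho g (delta x) = delta (g * x * g⁻¹) := by
  funext t
  simp only [rho_apply, delta]
  congr 1
  have : g⁻¹ * t * g = x ↔ t = g * x * g⁻¹ := by
    constructor <;> intro h
    · rw [← h]; group
    · rw [h]; group
  exact if_congr this rfl rfl

end CoxAux

namespace CoxAux

variable {B W : Type*} [Group W] {M : CoxeterMatrix B} (cs : CoxeterSystem M W)

local prefix:100 "ss" => cs.simple

/-- Powers in the semidirect product. -/
lemma sd_pow (n : NN W) (w : W) (k : ℕ) :
    (⟨n, w⟩ : NN W ⋊[rho] W) ^ k = ⟨∏ r ∈ Finset.range k, rho (w ^ r) n, w ^ k⟩ := by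
  induction k with
  | zero => ext <;> simp
  | succ k ih =>
    rw [pow_succ, ih, SemidirectProduct.mul_def]
    ext <;> simp [Finset.prod_range_succ, pow_succ]

lemma key_comm (i j : B) (m : ℕ) :
    ss i * ((ss i * ss j)⁻¹) ^ m = (ss i * ss j) ^ m * ss i := by
  induction m with
  | zero => simp
  | succ m ih =>
    rw [pow_succ, pow_succ, ← mul_assoc, ih, mul_assoc, mul_assoc]
    congr 1
    rw [mul_inv_rev, cs.inv_simple, cs.inv_simple, ← mul_assoc]

lemma pair_identity1 (i j : B) (r : ℕ) :
    (ss i * ss j) ^ r * ss i * ((ss i * ss j) ^ r)⁻¹ = (ss i * ss j) ^ (2 * r) * ss i := by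
  rw [mul_assoc, ← inv_pow, key_comm, ← mul_assoc, ← pow_add, two_mul]

lemma pair_identity2 (i j : B) (r : ℕ) :
    (ss i * ss j) ^ r * (ss i * ss j * (ss i)⁻¹) * ((ss i * ss j) ^ r)⁻¹
      = (ss i * ss j) ^ (2 * r + 1) * ss i := by
  rw [cs.inv_simple, ← inv_pow]
  have h1 : (ss i * ss j) ^ r * (ss i * ss j * ss i) * ((ss i * ss j)⁻¹) ^ r
      = (ss i * ss j) ^ (r+1) * (ss i * ((ss i * ss j)⁻¹) ^ r) := by
    rw [pow_succ]; group
  rw [h1, key_comm, ← mul_assoc, ← pow_add]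
  congr 2
  omega

end CoxAux

namespace CoxAux

variable {B W : Type*} [Group W] {M : CoxeterMatrix B} (cs : CoxeterSystem M W)

local prefix:100 "ss" => cs.simple
local prefix:100 "π" => cs.wordProd

noncomputable def liftFun (i : B) : NN W ⋊[rho] W := ⟨delta (ss i), ss i⟩

lemma liftable : M.IsLiftable (liftFun cs) := by
  intro i j
  have hmul : liftFun cs i * liftFun cs j
      = ⟨delta (ss i) * rho (ss i) (delta (ss j)), ss i * ss j⟩ := rfl
  have hc : (ss i * ss j) ^ (M i j) = 1 := cs.simple_mul_simple_pow i j
  rw [hmul, sd_pow]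
  have hterm : ∀ r : ℕ, rho ((ss i * ss j) ^ r) (delta (ss i) * rho (ss i) (delta (ss j)))
      = delta ((ss i * ss j) ^ (2 * r) * ss i) * delta ((ss i * ss j) ^ (2 * r + 1) * ss i) := by
    intro r
    rw [map_mul]
    congr 1
    · rw [rho_delta, pair_identity1]
    · rw [← MulAut.mul_apply, ← map_mul rho, rho_delta, ← pair_identity2 cs i j r]
      congr 1
      group
  have expand : ∀ m : ℕ, (∏ r ∈ Finset.range m,
        (delta ((ss i * ss j) ^ (2 * r) * ss i) * delta ((ss i * ss j) ^ (2 * r + 1) * ss i)))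
      = ∏ k ∈ Finset.range (2 * m), delta ((ss i * ss j) ^ k * ss i) := by
    intro m
    induction m with
    | zero => simp
    | succ m ih =>
      rw [Finset.prod_range_succ, ih, show 2 * (m + 1) = (2 * m + 1) + 1 by omega,
        Finset.prod_range_succ, Finset.prod_range_succ, mul_assoc]
  refine SemidirectProduct.ext ?_ ?_
  · show (∏ r ∈ Finset.range (M i j),
        rho ((ss i * ss j) ^ r) (delta (ss i) * rho (ss i) (delta (ss j)))) = 1
    rw [Finset.prod_congr rfl (fun r _ => hterm r), expand, two_mul, Finset.prod_range_add]
    have : ∀ k, delta ((ss i * ss j) ^ (M i j + k) * ss i)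
        = delta ((ss i * ss j) ^ k * ss i) := by
      intro k
      rw [pow_add, hc, one_mul]
    rw [Finset.prod_congr rfl (fun k _ => this k)]
    exact NN.mul_self _
  · show (ss i * ss j) ^ (M i j) = 1
    exact hc

noncomputable def Phi : W →* NN W ⋊[rho] W := cs.lift ⟨liftFun cs, liftable cs⟩

@[simp] lemma Phi_simple (i : B) : Phi cs (ss i) = ⟨delta (ss i), ss i⟩ :=
  cs.lift_apply_simple (liftable cs) i

lemma Phi_right (w : W) : (Phi cs w).right = w := by
  have : (SemidirectProduct.rightHom.comp (Phi cs)) = MonoidHom.id W := by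
    apply cs.ext_simple
    intro i
    simp [Phi, liftFun]
  exact DFunLike.congr_fun this w

lemma Phi_mul_left (x y t : W) :
    (Phi cs (x * y)).left t = (Phi cs x).left t * (Phi cs y).left (x⁻¹ * t * x) := by
  rw [map_mul, SemidirectProduct.mul_left, Pi.mul_apply, Phi_right]
  rfl

open Classical in
lemma Phi_left_count (ω : List B) (t : W) :
    (Phi cs (π ω)).left t = Multiplicative.ofAdd (((cs.leftInvSeq ω).count t : ℕ) : ZMod 2) := by
  induction ω generalizing t with
  | nil => simp [map_one (Phi cs)]
  | cons i ω ih =>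
    rw [cs.wordProd_cons, Phi_mul_left, Phi_simple]
    have hlis : cs.leftInvSeq (i :: ω) = ss i :: List.map (⇑(MulAut.conj (ss i))) (cs.leftInvSeq ω) := rfl
    rw [hlis, List.count_cons]
    have hinj : Function.Injective (⇑(MulAut.conj (ss i))) := (MulAut.conj (ss i)).injective
    have hcm := List.count_map_of_injective (cs.leftInvSeq ω) _ hinj ((ss i)⁻¹ * t * ss i)
    have harg : (MulAut.conj (ss i)) ((ss i)⁻¹ * t * ss i) = t := by
      simp only [MulAut.conj_apply]; group
    rw [harg] at hcm
    show delta (ss i) t * (Phi cs (π ω)).left ((ss i)⁻¹ * t * ss i) = _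
    rw [ih, ← hcm, delta]
    rw [← ofAdd_add]
    congr 1
    push_cast
    rw [add_comm]
    congr 1
    have hbeq : (cs.simple i == t) = decide (cs.simple i = t) := rfl
    by_cases h : t = cs.simple i
    · simp [h]
    · have h' : ¬ (cs.simple i = t) := fun hh => h hh.symm
      simp [h, h']

end CoxAux

namespace CoxAux

variable {B W : Type*} [Group W] {M : CoxeterMatrix B} (cs : CoxeterSystem M W)

local prefix:100 "ss" => cs.simple
local prefix:100 "π" => cs.wordProd
local prefix:100 "ℓ" => cs.length

/-- Parity of the number of times `t` occurs as a left inversion of `w`. -/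
noncomputable def eta (w t : W) : Multiplicative (ZMod 2) := (Phi cs w).left t

lemma eta_mul (x y t : W) : eta cs (x * y) t = eta cs x t * eta cs y (x⁻¹ * t * x) :=
  Phi_mul_left cs x y t

lemma eta_one (t : W) : eta cs 1 t = 1 := by
  rw [eta, map_one]; rfl

open Classical in
lemma eta_eq_count (ω : List B) (t : W) :
    eta cs (π ω) t = Multiplicative.ofAdd (((cs.leftInvSeq ω).count t : ℕ) : ZMod 2) :=
  Phi_left_count cs ω t

lemma eta_mem_lis {ω : List B} (hred : cs.IsReduced ω) (t : W) :
    eta cs (π ω) t = Multiplicative.ofAdd 1 ↔ t ∈ cs.leftInvSeq ω := by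
  classical
  rw [eta_eq_count]
  constructor
  · intro h
    by_contra hmem
    rw [List.count_eq_zero_of_not_mem hmem] at h
    exact absurd h (by decide)
  · intro h
    rw [List.count_eq_one_of_mem hred.nodup_leftInvSeq h]
    norm_num

lemma eta_simple_self (i : B) : eta cs (ss i) (ss i) = Multiplicative.ofAdd 1 := by
  rw [eta, Phi_simple]
  show delta (ss i) (ss i) = _
  simp [delta]

lemma eta_refl_self {t : W} (ht : cs.IsReflection t) : eta cs t t = Multiplicative.ofAdd 1 := by
  obtain ⟨g, i, rfl⟩ := ht
  set t := g * ss i * g⁻¹ with hT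
  have e0 : eta cs g t * eta cs g⁻¹ (g⁻¹ * t * g) = 1 := by
    rw [← eta_mul, mul_inv_cancel, eta_one]
  have harg1 : g⁻¹ * t * g = ss i := by rw [hT]; group
  have e1 : eta cs t t = eta cs g t * eta cs (ss i * g⁻¹) (ss i) := by
    have : t = g * (ss i * g⁻¹) := by rw [hT]; group
    nth_rewrite 1 [this]
    rw [eta_mul, harg1]
  have e2 : eta cs (ss i * g⁻¹) (ss i) = Multiplicative.ofAdd 1 * eta cs g⁻¹ (g⁻¹ * t * g) := by
    rw [eta_mul, eta_simple_self]
    congr 2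
    rw [harg1]
    group
  rw [e1, e2, ← mul_assoc, mul_comm (eta cs g t), mul_assoc, e0, mul_one]

lemma eta_eq_ofAdd_one_iff {t : W} (ht : cs.IsReflection t) (w : W) :
    ℓ (t * w) < ℓ w ↔ eta cs w t = Multiplicative.ofAdd 1 := by
  constructor
  · intro h
    by_contra hne
    have h0 : eta cs w t = Multiplicative.ofAdd 0 := by
      have hh : ∀ x : Multiplicative (ZMod 2),
          x = Multiplicative.ofAdd 0 ∨ x = Multiplicative.ofAdd 1 := by decide
      rcases hh (eta cs w t) with h' | h'
      · exact h'
      · exact absurd h' hne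
    have h1 : eta cs (t * w) t = Multiplicative.ofAdd 1 := by
      rw [eta_mul, eta_refl_self cs ht, show t⁻¹ * t * t = t by group, h0]
      decide
    obtain ⟨ω, hω, hprod⟩ := cs.exists_reduced_word' (t * w)
    rw [hprod] at h1
    have hinv := (cs.isLeftInversion_of_mem_leftInvSeq hω ((eta_mem_lis cs hω t).mp h1)).2
    rw [← hprod, ← mul_assoc, ht.mul_self, one_mul] at hinv
    omega
  · intro h
    obtain ⟨ω, hω, rfl⟩ := cs.exists_reduced_word' w
    exact (cs.isLeftInversion_of_mem_leftInvSeq hω ((eta_mem_lis cs hω t).mp h)).2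

lemma strong_exchange_left {t w : W} (ht : cs.IsReflection t) (hlt : ℓ (t * w) < ℓ w)
    {ω : List B} (hred : cs.IsReduced ω) (hw : π ω = w) :
    ∃ j, ∃ _ : j < ω.length, π (ω.eraseIdx j) = t * w := by
  have h1 : eta cs (π ω) t = Multiplicative.ofAdd 1 := by
    rw [hw]; exact (eta_eq_ofAdd_one_iff cs ht w).mp hlt
  have hmem := (eta_mem_lis cs hred t).mp h1
  obtain ⟨j, hj, hget⟩ := List.mem_iff_getElem.mp hmem
  rw [cs.length_leftInvSeq] at hj
  refine ⟨j, hj, ?_⟩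
  have h2 := cs.getD_leftInvSeq_mul_wordProd ω j
  rw [List.getD_eq_getElem _ 1 (by rw [cs.length_leftInvSeq]; exact hj), hget, hw] at h2
  exact h2.symm

end CoxAux

namespace CoxAux

variable {B W : Type*} [Group W] {M : CoxeterMatrix B} (cs : CoxeterSystem M W)

local prefix:100 "ss" => cs.simple
local prefix:100 "π" => cs.wordProd
local prefix:100 "ℓ" => cs.length

lemma strong_exchange_right {t w : W} (ht : cs.IsReflection t) (hlt : ℓ (w * t) < ℓ w)
    {ω : List B} (hred : cs.IsReduced ω) (hw : π ω = w) :
    ∃ j, ∃ _ : j < ω.length, π (ω.eraseIdx j) = w * t := by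
  have ht' : cs.IsReflection (w * t * w⁻¹) := ht.conj w
  have heq : w * t * w⁻¹ * w = w * t := by group
  have h := strong_exchange_left cs ht' (by rw [heq]; exact hlt) hred hw
  obtain ⟨j, hj, hp⟩ := h
  exact ⟨j, hj, by rw [hp, heq]⟩

lemma isReduced_nil : cs.IsReduced ([] : List B) := by
  simp [CoxeterSystem.IsReduced]

lemma deletion : ∀ (n : ℕ) (ω : List B), ω.length = n →
    ∃ σ : List B, σ.Sublist ω ∧ cs.IsReduced σ ∧ π σ = π ω := by
  intro n
  induction n using Nat.strong_induction_on with
  | _ n ihn =>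
  intro ω hn
  subst hn
  by_cases hred : cs.IsReduced ω
  · exact ⟨ω, List.Sublist.refl ω, hred, rfl⟩
  have hlen : ω.length ≠ 0 := by
    intro h
    rw [List.length_eq_zero_iff] at h
    exact hred (h ▸ isReduced_nil cs)
  have hwit : ¬ cs.IsReduced (ω.take (ω.length - 1 + 1)) := by
    rw [show ω.length - 1 + 1 = ω.length by omega, List.take_length]; exact hred
  have hex : ∃ k, ¬ cs.IsReduced (ω.take (k+1)) := ⟨ω.length - 1, hwit⟩
  classical
  set k := Nat.find hex with hkdef
  have hk : ¬ cs.IsReduced (ω.take (k+1)) := Nat.find_spec hex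
  have hkle : k ≤ ω.length - 1 := Nat.find_min' hex hwit
  have hklt : k < ω.length := by omega
  have hkred : cs.IsReduced (ω.take k) := by
    rcases Nat.eq_zero_or_pos k with h0 | h0
    · rw [h0]; simpa using isReduced_nil cs
    · have hmin := Nat.find_min hex (show k - 1 < k by omega)
      rw [show k - 1 + 1 = k by omega] at hmin
      exact not_not.mp hmin
  have hlenk : ℓ (π (ω.take k)) = k := by
    have h2 := hkred
    rw [CoxeterSystem.IsReduced] at h2
    rw [h2, List.length_take]
    omega
  have htake : ω.take k ++ [ω[k]] = ω.take (k+1) := by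
    simpa using List.take_concat_get ω k hklt
  have hprod : π (ω.take (k+1)) = π (ω.take k) * ss (ω[k]) := by
    rw [← htake, cs.wordProd_append, cs.wordProd_singleton]
  have hnotred : ℓ (π (ω.take k) * ss (ω[k])) ≠ k + 1 := by
    intro h
    apply hk
    have hlt1 : (ω.take (k+1)).length = k + 1 := by rw [List.length_take]; omega
    rw [CoxeterSystem.IsReduced, hprod, h, hlt1]
  have hlt : ℓ (π (ω.take k) * ss (ω[k])) < ℓ (π (ω.take k)) := by
    rcases cs.length_mul_simple (π (ω.take k)) (ω[k]) with h | h
    · rw [hlenk] at h; exact absurd h hnotred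
    · rw [hlenk] at h; omega
  obtain ⟨j, hj, hjprod⟩ :=
    strong_exchange_right cs (cs.isReflection_simple (ω[k])) hlt hkred rfl
  set σ₀ := (ω.take k).eraseIdx j ++ ω.drop (k+1) with hσ₀
  have hσprod : π σ₀ = π ω := by
    rw [hσ₀, cs.wordProd_append, hjprod, ← hprod, ← cs.wordProd_append,
      List.take_append_drop]
  have hσsub : σ₀.Sublist ω := by
    have h1 : ((ω.take k).eraseIdx j).Sublist (ω.take k) := List.eraseIdx_sublist _ j
    have h2 := List.Sublist.append h1 (List.Sublist.refl (ω.drop (k+1)))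
    rw [← List.eraseIdx_eq_take_drop_succ] at h2
    exact h2.trans (List.eraseIdx_sublist ω k)
  have hσlen : σ₀.length < ω.length := by
    rw [List.length_take] at hj
    have hje : j < ((ω.take k)).length := by rw [List.length_take]; omega
    rw [hσ₀, List.length_append, List.length_eraseIdx_of_lt hje, List.length_take,
      List.length_drop]
    omega
  obtain ⟨σ, hs1, hs2, hs3⟩ := ihn σ₀.length hσlen σ₀ rfl
  exact ⟨σ, hs1.trans hσsub, hs2, by rw [hs3, hσprod]⟩

end CoxAux

variable {B W : Type*} [Group W]

namespace CoxAux

variable {M : CoxeterMatrix B} (cs : CoxeterSystem M W)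

local prefix:100 "ss" => cs.simple
local prefix:100 "π" => cs.wordProd
local prefix:100 "ℓ" => cs.length

lemma isCoxReflection_iff (t : W) : IsCoxReflection cs t ↔ cs.IsReflection t := Iff.rfl

/-- Any element below `w` in Bruhat order is the product of a reduced sublist of any
reduced word for `w`. -/
lemma chain_subword {v w : W} (h : BruhatLE cs v w) :
    ∀ ω : List B, cs.IsReduced ω → π ω = w →
      ∃ σ, σ.Sublist ω ∧ cs.IsReduced σ ∧ π σ = v := by
  induction h with
  | refl => exact fun ω h1 h2 => ⟨ω, List.Sublist.refl ω, h1, h2⟩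
  | @tail b c hab hbc ih =>
    intro ω hred hw
    obtain ⟨hlen, t, htrefl, rfl⟩ := hbc
    have htr : cs.IsReflection t := (isCoxReflection_iff cs t).mp htrefl
    have hlt : ℓ (b * t * t) < ℓ (b * t) := by
      rw [mul_assoc, htr.mul_self, mul_one]; exact hlen
    obtain ⟨j, hj, hjp⟩ := strong_exchange_right cs htr hlt hred hw
    rw [mul_assoc, htr.mul_self, mul_one] at hjp
    obtain ⟨σ₂, h21, h22, h23⟩ := deletion cs (ω.eraseIdx j).length (ω.eraseIdx j) rfl
    obtain ⟨σ, hs1, hs2, hs3⟩ := ih σ₂ h22 (by rw [h23, hjp])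
    exact ⟨σ, hs1.trans (h21.trans (List.eraseIdx_sublist ω j)), hs2, hs3⟩

/-- The greedy step: multiply by the simple reflection if it decreases length. -/
noncomputable def minb (v : W) (i : B) : W :=
  if cs.length (v * cs.simple i) < cs.length v then v * cs.simple i else v

/-- The right-to-left greedy ("positive subexpression") scan of a reduced word, started at the
product of a reduced sublist, terminates at the identity. -/
lemma grev_eq_one : ∀ (ρ : List B), cs.IsReduced ρ → ∀ (σ : List B), σ.Sublist ρ →
    cs.IsReduced σ → List.foldl (minb cs) (π σ) ρ.reverse = 1 := by
  intro ρ
  induction ρ using List.reverseRecOn with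
  | nil =>
    intro _ σ hσ _
    rw [List.sublist_nil.mp hσ]
    simp
  | append_singleton ρ' j ih =>
    intro hred σ hσ hσred
    have hρ'red : cs.IsReduced ρ' := by
      have h := hred.take ρ'.length
      rwa [List.take_left] at h
    rw [List.reverse_append, List.reverse_singleton, List.singleton_append, List.foldl_cons]
    rcases List.sublist_append_iff.mp hσ with ⟨r₁, r₂, rfl, hr₁, hr₂⟩
    rcases List.sublist_singleton.mp hr₂ with rfl | rfl
    · -- σ = r₁, a sublist of ρ'
      rw [List.append_nil] at hσred ⊢
      by_cases hdesc : ℓ (π r₁ * ss j) < ℓ (π r₁)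
      · obtain ⟨m, hm, hmp⟩ :=
          strong_exchange_right cs (cs.isReflection_simple j) hdesc hσred rfl
        have hmin : minb cs (π r₁) j = π (r₁.eraseIdx m) := by
          rw [minb, if_pos hdesc, hmp]
        have hered : cs.IsReduced (r₁.eraseIdx m) := by
          have hσl : ℓ (π r₁) = r₁.length := hσred
          have hlm : ℓ (π r₁ * ss j) + 1 = ℓ (π r₁) := by
            rcases cs.length_mul_simple (π r₁) j with h | h
            · omega
            · exact h
          show ℓ (π (r₁.eraseIdx m)) = (r₁.eraseIdx m).length
          rw [hmp, List.length_eraseIdx_of_lt hm]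
          omega
        rw [hmin]
        exact ih hρ'red _ ((List.eraseIdx_sublist r₁ m).trans hr₁) hered
      · have hmin : minb cs (π r₁) j = π r₁ := by rw [minb, if_neg hdesc]
        rw [hmin]
        exact ih hρ'red r₁ hr₁ hσred
    · -- σ = r₁ ++ [j]
      have hv : π (r₁ ++ [j]) = π r₁ * ss j := by
        rw [cs.wordProd_append, cs.wordProd_singleton]
      have hσlen : ℓ (π (r₁ ++ [j])) = r₁.length + 1 := by
        have := hσred
        rwa [CoxeterSystem.IsReduced, List.length_append, List.length_singleton] at this
      have hr₁len : ℓ (π r₁) = r₁.length := by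
        have hub := cs.length_wordProd_le r₁
        have hlb : r₁.length ≤ ℓ (π r₁) := by
          rcases cs.length_mul_simple (π r₁) j with h | h
          · rw [← hv, hσlen] at h; omega
          · rw [← hv, hσlen] at h; omega
        omega
      have hmin : minb cs (π (r₁ ++ [j])) j = π r₁ := by
        rw [minb, if_pos]
        · rw [hv, cs.simple_mul_simple_cancel_right]
        · rw [hv, cs.simple_mul_simple_cancel_right, hr₁len, ← hv, hσlen]
          omega
      rw [hmin]
      exact ih hρ'red r₁ hr₁ hr₁len

end CoxAux

/-- If the positive subexpression for `v` inside a reduced word `(i :: ω)` for `w`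
starts with `v_(1) = s_i`, then `v ≰ s_i * w`. -/
theorem not_le_of_positive_subexpr_starts_with_simple
    {M : CoxeterMatrix B} (cs : CoxeterSystem M W)
    (i : B) (ω : List B) (hred : cs.IsReduced (i :: ω)) (v : W)
    (hv : BruhatLE cs v (cs.wordProd (i :: ω)))
    (vs : Fin ((i :: ω).length + 1) → W)
    (hvs : IsPositiveSubexpr cs (i :: ω) v vs)
    (h1 : vs 1 = cs.simple i) :
    ¬ BruhatLE cs v (cs.simple i * cs.wordProd (i :: ω)) := by
  intro hle
  have hsw : cs.simple i * cs.wordProd (i :: ω) = cs.wordProd ω := by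
    rw [cs.wordProd_cons, ← mul_assoc, cs.simple_mul_simple_self, one_mul]
  rw [hsw] at hle
  have hωred : cs.IsReduced ω := by
    have h := hred.drop 1
    simpa using h
  obtain ⟨σ, hσ1, hσ2, hσ3⟩ := CoxAux.chain_subword cs hle ω hωred rfl
  have hfold : List.foldl (CoxAux.minb cs) v ω.reverse = 1 := by
    rw [← hσ3]
    exact CoxAux.grev_eq_one cs ω hωred σ hσ1 hσ2
  obtain ⟨hvs0, hvslast, hvsstep⟩ := hvs
  have bridge : ∀ d k (hk : k + d = (i :: ω).length),
      vs ⟨k, by omega⟩ = List.foldl (CoxAux.minb cs) v (((i :: ω).drop k).reverse) := by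
    intro d
    induction d with
    | zero =>
      intro k hk
      have hkc : k = (i :: ω).length := by omega
      subst hkc
      rw [List.drop_length]
      simp only [List.reverse_nil, List.foldl_nil]; exact hvslast
    | succ d ihd =>
      intro k hk
      have hklt : k < (i :: ω).length := by omega
      have ih' : vs (Fin.succ ⟨k, hklt⟩) =
          List.foldl (CoxAux.minb cs) v (((i :: ω).drop (k+1)).reverse) :=
        ihd (k+1) (by omega)
      have hdrop : (i :: ω).drop k = (i :: ω).get ⟨k, hklt⟩ :: (i :: ω).drop (k+1) := by
        rw [List.get_eq_getElem]
        exact List.drop_eq_getElem_cons hklt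
      rw [hdrop, List.reverse_cons]
      rw [List.foldl_append, List.foldl_cons, List.foldl_nil, ← ih']
      show vs (Fin.castSucc ⟨k, hklt⟩) = CoxAux.minb cs (vs (Fin.succ ⟨k, hklt⟩))
        ((i :: ω).get ⟨k, hklt⟩)
      obtain ⟨hstep, hpos⟩ := hvsstep ⟨k, hklt⟩
      rcases hstep with he | he
      · rw [CoxAux.minb, if_neg]
        · exact he.symm
        · rw [he]
          omega
      · rw [CoxAux.minb, if_pos]
        · rw [he, cs.simple_mul_simple_cancel_right]
        · rw [he, cs.simple_mul_simple_cancel_right]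
          exact hpos
  have hb := bridge ((i :: ω).length - 1) 1 (by simp; omega)
  have hone : vs 1 = 1 := by
    have h1eq : (1 : Fin ((i :: ω).length + 1)) = ⟨1, by simp⟩ := by
      apply Fin.ext
      simp [Fin.val_one]
    rw [h1eq, hb]
    simpa using hfold
  rw [hone] at h1
  have := cs.length_simple i
  rw [← h1, cs.length_one] at this
  exact absurd this (by omega)
end

section
/- Let ϑ : ℝ_{>0} × ℝ^N → ℝ^N be a smooth map giving an action of the multiplicative group (ℝ_{>0}, ·) on ℝ^N, and suppose ∂/∂t ‖ϑ(t,x)‖ > 0 for all t > 0 and all x ≠ 0 (Euclidean norm). Then: (i) ϑ(t, 0) = 0 for all t > 0; (ii) lim_{t→0⁺} ϑ(t, x) = 0 for every x ∈ ℝ^N. -/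
open Set Filter Topology

private lemma mapClusterPt_eq_of_tendsto {X ι : Type*} [TopologicalSpace X] [T2Space X]
    {F : Filter ι} {u : ι → X} {a b : X}
    (h : MapClusterPt a F u) (h' : Tendsto u F (nhds b)) : a = b := by
  have h2 : (𝓝 a ⊓ Filter.map u F).NeBot := h
  exact eq_of_nhds_neBot (h2.mono (inf_le_inf_left _ h'))

/-- Properties of a smooth cone action: if `ϑ` is a smooth `(ℝ_{>0}, ·)`-action on `ℝ^N`
with `∂/∂t ‖ϑ(t,x)‖ > 0` for all `t > 0` and `x ≠ 0`, then `ϑ(t,0) = 0` for all `t > 0`,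
and `ϑ(t,x) → 0` as `t → 0⁺` for every `x`. -/
theorem smooth_cone_action_fixes_zero_and_tendsto_zero (N : ℕ)
    (ϑ : ℝ → EuclideanSpace ℝ (Fin N) → EuclideanSpace ℝ (Fin N))
    (hsmooth : ContDiffOn ℝ (⊤ : ℕ∞)
      (fun p : ℝ × EuclideanSpace ℝ (Fin N) => ϑ p.1 p.2) (Ioi (0 : ℝ) ×ˢ univ))
    (hone : ∀ x, ϑ 1 x = x)
    (hmul : ∀ s t : ℝ, 0 < s → 0 < t → ∀ x, ϑ s (ϑ t x) = ϑ (s * t) x)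
    (hderiv : ∀ x : EuclideanSpace ℝ (Fin N), x ≠ 0 → ∀ t : ℝ, 0 < t →
      0 < deriv (fun s => ‖ϑ s x‖) t) :
    (∀ t : ℝ, 0 < t → ϑ t 0 = 0) ∧
    (∀ x, Tendsto (fun t => ϑ t x) (nhdsWithin 0 (Ioi 0)) (nhds 0)) := by
  -- Part (i)
  have hfix : ∀ t : ℝ, 0 < t → ϑ t 0 = 0 := by
    intro t ht
    by_contra hne
    have hz : ϑ t⁻¹ (ϑ t 0) = 0 := by
      rw [hmul _ _ (inv_pos.2 ht) ht, inv_mul_cancel₀ ht.ne', hone]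
    have hmin : IsLocalMin (fun s => ‖ϑ s (ϑ t 0)‖) t⁻¹ := by
      apply Filter.Eventually.of_forall
      intro s
      simp [hz]
    have h0 := hmin.deriv_eq_zero
    have h1 := hderiv (ϑ t 0) hne t⁻¹ (inv_pos.2 ht)
    rw [h0] at h1
    exact lt_irrefl 0 h1
  refine ⟨hfix, ?_⟩
  -- continuity facts
  have hcontAt : ∀ t : ℝ, 0 < t → ∀ x : EuclideanSpace ℝ (Fin N),
      ContinuousAt (fun p : ℝ × EuclideanSpace ℝ (Fin N) => ϑ p.1 p.2) (t, x) := by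
    intro t ht x
    exact hsmooth.continuousOn.continuousAt
      ((isOpen_Ioi.prod isOpen_univ).mem_nhds ⟨ht, mem_univ x⟩)
  have hcont1 : ∀ t : ℝ, 0 < t → ∀ x : EuclideanSpace ℝ (Fin N),
      ContinuousAt (fun s : ℝ => ϑ s x) t := by
    intro t ht x
    have hp : ContinuousAt (fun s : ℝ => ((s, x) : ℝ × EuclideanSpace ℝ (Fin N))) t :=
      (continuous_id.prodMk continuous_const).continuousAt
    have h := ContinuousAt.comp (f := fun s => (s, x)) (hcontAt t ht x) hp
    exact h
  have hcont2 : ∀ t : ℝ, 0 < t → ∀ x : EuclideanSpace ℝ (Fin N),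
      ContinuousAt (fun z : EuclideanSpace ℝ (Fin N) => ϑ t z) x := by
    intro t ht x
    have hp : ContinuousAt (fun z : EuclideanSpace ℝ (Fin N) => ((t, z) : ℝ × EuclideanSpace ℝ (Fin N))) x :=
      (continuous_const.prodMk continuous_id).continuousAt
    have h := ContinuousAt.comp (f := fun z => (t, z)) (hcontAt t ht x) hp
    exact h
  intro x
  rcases eq_or_ne x 0 with rfl | hx
  · refine tendsto_const_nhds.congr' ?_
    filter_upwards [self_mem_nhdsWithin] with t ht
    exact (hfix t ht).symm
  · set g : ℝ → ℝ := fun s => ‖ϑ s x‖ with hg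
    have hgcont : ContinuousOn g (Ioi 0) := by
      intro t ht
      exact ((continuous_norm.continuousAt.comp (hcont1 t ht x))).continuousWithinAt
    have hmono : StrictMonoOn g (Ioi 0) := by
      apply strictMonoOn_of_deriv_pos (convex_Ioi 0) hgcont
      intro t ht
      rw [interior_Ioi] at ht
      exact hderiv x hx t ht
    have hbdd : BddBelow (g '' Ioi 0) := ⟨0, fun y hy => by
      obtain ⟨t, _, rfl⟩ := hy; exact norm_nonneg _⟩
    set L : ℝ := sInf (g '' Ioi 0) with hL
    have htend : Tendsto g (𝓝[>] (0 : ℝ)) (𝓝 L) :=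
      hmono.monotoneOn.tendsto_nhdsGT hbdd
    have hL0 : 0 ≤ L := by
      apply le_csInf ⟨g 1, mem_image_of_mem g (by norm_num)⟩
      rintro y ⟨t, _, rfl⟩
      exact norm_nonneg _
    have hLzero : L = 0 := by
      by_contra hLne
      have hLpos : 0 < L := lt_of_le_of_ne hL0 (Ne.symm hLne)
      -- find a cluster point of ϑ t x as t → 0⁺
      have hev : ∀ᶠ t in 𝓝[>] (0 : ℝ), ϑ t x ∈ Metric.closedBall (0 : EuclideanSpace ℝ (Fin N)) ‖x‖ := by
        filter_upwards [Ioc_mem_nhdsGT_of_mem (by norm_num : (0:ℝ) ∈ Ico (0:ℝ) 1)] with t ht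
        rw [mem_closedBall_zero_iff]
        have : g t ≤ g 1 := by
          rcases eq_or_lt_of_le ht.2 with h | h
          · rw [h]
          · exact (hmono.monotoneOn ht.1 (by norm_num) ht.2)
        simpa [hg, hone] using this
      obtain ⟨y, hy, hcl⟩ :=
        (isCompact_closedBall (0 : EuclideanSpace ℝ (Fin N)) ‖x‖).exists_mapClusterPt
          (le_principal_iff.2 (mem_map.2 (by filter_upwards [hev] with t ht using ht)))
      have hyn : ‖y‖ = L := by
        have : MapClusterPt ‖y‖ (𝓝[>] (0:ℝ)) (fun t => ‖ϑ t x‖) :=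
          hcl.continuousAt_comp continuous_norm.continuousAt
        exact mapClusterPt_eq_of_tendsto this htend
      have hyne : y ≠ 0 := by
        intro h; rw [h, norm_zero] at hyn; exact hLne hyn.symm
      -- ‖ϑ s y‖ = L for all s > 0
      have hconst : ∀ s : ℝ, 0 < s → ‖ϑ s y‖ = L := by
        intro s hs
        have hcl1 : MapClusterPt (ϑ s y) (𝓝[>] (0:ℝ)) (fun t => ϑ s (ϑ t x)) :=
          hcl.continuousAt_comp (hcont2 s hs y)
        have heq : (fun t => ϑ s (ϑ t x)) =ᶠ[𝓝[>] (0:ℝ)] (fun t => ϑ (s * t) x) := by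
          filter_upwards [self_mem_nhdsWithin] with t ht
          exact hmul s t hs ht x
        have hcl2 : MapClusterPt (ϑ s y) (𝓝[>] (0:ℝ)) (fun t => ϑ (s * t) x) := by
          unfold MapClusterPt at hcl1 ⊢
          rwa [← Filter.map_congr heq]
        have hcl3 : MapClusterPt ‖ϑ s y‖ (𝓝[>] (0:ℝ)) (fun t => g (s * t)) :=
          hcl2.continuousAt_comp continuous_norm.continuousAt
        have htend2 : Tendsto (fun t : ℝ => g (s * t)) (𝓝[>] (0:ℝ)) (𝓝 L) := by
          apply htend.comp
          have h1 : Tendsto (fun t : ℝ => s * t) (𝓝[>] (0:ℝ)) (𝓝 0) := by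
            have h0 : Tendsto (fun t : ℝ => s * t) (𝓝 0) (𝓝 (s * 0)) :=
              (continuous_const.mul continuous_id).tendsto (0 : ℝ)
            simpa using h0.mono_left nhdsWithin_le_nhds
          refine tendsto_nhdsWithin_iff.2 ⟨h1, ?_⟩
          filter_upwards [self_mem_nhdsWithin] with t ht
          exact mul_pos hs ht
        exact mapClusterPt_eq_of_tendsto hcl3 htend2
      -- the map s ↦ ‖ϑ s y‖ is locally constant near 1, so its derivative vanishes
      have hEq : (fun s => ‖ϑ s y‖) =ᶠ[𝓝 (1:ℝ)] (fun _ => L) := by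
        filter_upwards [isOpen_Ioi.mem_nhds (by norm_num : (1:ℝ) ∈ Ioi 0)] with s hs
        exact hconst s hs
      have hd0 : deriv (fun s => ‖ϑ s y‖) 1 = 0 := by
        rw [hEq.deriv_eq, deriv_const]
      have := hderiv y hyne 1 one_pos
      rw [hd0] at this
      exact lt_irrefl 0 this
    rw [hLzero] at htend
    exact tendsto_zero_iff_norm_tendsto_zero.2 htend
end

section
/- Let f(t', t'') = R(t',t'')/Q(t',t'') be a ratio of nonzero polynomials with positive real coefficients in variables t' = (t'₁,…,t'_m) and t'' = (t''₁,…,t''_p). Suppose the corresponding function ℝ_{>0}^m × ℝ_{>0}^p → ℝ_{>0} extends to a continuous function ℝ_{>0}^m × ℝ_{≥0}^p → ℝ_{≥0}. Then the limit lim_{t''→0} f(t', t''), as a function ℝ_{>0}^m → ℝ_{≥0}, is either identically zero or can be represented by a subtraction-free rational expression in t' (a ratio of nonzero polynomials with positive coefficients). -/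
open MvPolynomial Set

/-- A nonzero (multivariate) polynomial with strictly positive real coefficients. -/
def IsPosPoly {σ : Type*} (p : MvPolynomial σ ℝ) : Prop :=
  p ≠ 0 ∧ ∀ d ∈ p.support, 0 < p.coeff d

open Finset Filter Topology

namespace SFAux

variable {m p : ℕ}

/-- total degree in the second group of variables -/
def deg2 (d : (Fin m ⊕ Fin p) →₀ ℕ) : ℕ := ∑ j : Fin p, d (Sum.inr j)

/-- restriction of an exponent vector to the first group of variables -/
noncomputable def restr (d : (Fin m ⊕ Fin p) →₀ ℕ) : Fin m →₀ ℕ :=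
  Finsupp.comapDomain Sum.inl d Sum.inl_injective.injOn

/-- the part of `P` of `deg2`-degree `a`, as a polynomial in the first variables -/
noncomputable def lowPart (P : MvPolynomial (Fin m ⊕ Fin p) ℝ) (a : ℕ) :
    MvPolynomial (Fin m) ℝ :=
  ∑ d ∈ P.support.filter (fun d => deg2 d = a), monomial (restr d) (P.coeff d)

noncomputable def uFun (P : MvPolynomial (Fin m ⊕ Fin p) ℝ) (a : ℕ)
    (t' : Fin m → ℝ) (s : ℝ) : ℝ :=
  ∑ d ∈ P.support, P.coeff d * (∏ i, t' i ^ d (Sum.inl i)) * s ^ (deg2 d - a)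

lemma eval_split (P : MvPolynomial (Fin m ⊕ Fin p) ℝ) (a : ℕ)
    (ha : ∀ d ∈ P.support, a ≤ deg2 d) (t' : Fin m → ℝ) (s : ℝ) :
    eval (Sum.elim t' (fun _ => s)) P = s ^ a * uFun P a t' s := by
  rw [eval_eq', uFun, Finset.mul_sum]
  apply Finset.sum_congr rfl
  intro d hd
  rw [Fintype.prod_sum_type]
  simp only [Sum.elim_inl, Sum.elim_inr]
  rw [Finset.prod_pow_eq_pow_sum]
  have h1 : (∑ j : Fin p, d (Sum.inr j)) = a + (deg2 d - a) := by
    have := ha d hd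
    unfold deg2 at *
    omega
  rw [h1, pow_add]
  ring

lemma uFun_continuous (P : MvPolynomial (Fin m ⊕ Fin p) ℝ) (a : ℕ) (t' : Fin m → ℝ) :
    Continuous (uFun P a t') := by
  unfold uFun
  exact continuous_finset_sum _ fun d _ => continuous_const.mul (continuous_pow _)

lemma uFun_zero (P : MvPolynomial (Fin m ⊕ Fin p) ℝ) (a : ℕ)
    (ha : ∀ d ∈ P.support, a ≤ deg2 d) (t' : Fin m → ℝ) :
    uFun P a t' 0 = eval t' (lowPart P a) := by
  rw [uFun, lowPart, map_sum, Finset.sum_filter]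
  apply Finset.sum_congr rfl
  intro d hd
  rw [eval_monomial]
  by_cases h : deg2 d = a
  · rw [if_pos h, h, Nat.sub_self, pow_zero, mul_one]
    congr 1
    rw [Finsupp.prod_fintype]
    · exact Finset.prod_congr rfl fun i _ => rfl
    · intro i; exact pow_zero _
  · have hle := ha d hd
    rw [if_neg h, zero_pow (by omega : deg2 d - a ≠ 0), mul_zero]

lemma lowPart_eval_pos (P : MvPolynomial (Fin m ⊕ Fin p) ℝ) (hP : IsPosPoly P) (a : ℕ)
    (hex : ∃ d ∈ P.support, deg2 d = a) (t' : Fin m → ℝ) (ht' : ∀ i, 0 < t' i) :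
    0 < eval t' (lowPart P a) := by
  rw [lowPart, map_sum]
  apply Finset.sum_pos
  · intro d hd
    rw [eval_monomial]
    apply mul_pos (hP.2 d (Finset.mem_filter.mp hd).1)
    rw [Finsupp.prod_fintype]
    · exact Finset.prod_pos fun i _ => pow_pos (ht' i) _
    · intro i; exact pow_zero _
  · obtain ⟨d, hd, hda⟩ := hex
    exact ⟨d, Finset.mem_filter.mpr ⟨hd, hda⟩⟩

lemma lowPart_isPos (P : MvPolynomial (Fin m ⊕ Fin p) ℝ) (hP : IsPosPoly P) (a : ℕ)
    (hex : ∃ d ∈ P.support, deg2 d = a) : IsPosPoly (lowPart P a) := by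
  have hnonneg : ∀ e, 0 ≤ coeff e (lowPart P a) := by
    intro e
    rw [lowPart]
    rw [MvPolynomial.coeff_sum]
    apply Finset.sum_nonneg
    intro d hd
    rw [coeff_monomial]
    split
    · exact (hP.2 d (Finset.mem_filter.mp hd).1).le
    · exact le_refl _
  have hne : lowPart P a ≠ 0 := by
    intro h
    have h2 := lowPart_eval_pos P hP a hex (fun _ => 1) (fun _ => one_pos)
    rw [h] at h2
    simp at h2
  exact ⟨hne, fun d hd =>
    lt_of_le_of_ne (hnonneg d) (Ne.symm (MvPolynomial.mem_support_iff.mp hd))⟩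

end SFAux

/-- If a subtraction-free rational expression `R/Q` in variables `(t', t'')` extends
continuously to `ℝ_{>0}^m × ℝ_{≥0}^p` with nonnegative values, then its limit as
`t'' → 0` is either identically zero on the positive orthant, or representable by a
subtraction-free rational expression in `t'`. -/
theorem sf_limit_is_sf (m p : ℕ)
    (R Q : MvPolynomial (Fin m ⊕ Fin p) ℝ)
    (hR : IsPosPoly R) (hQ : IsPosPoly Q)
    (F : (Fin m → ℝ) → (Fin p → ℝ) → ℝ)
    (hFcont : ContinuousOn (fun q : (Fin m → ℝ) × (Fin p → ℝ) => F q.1 q.2)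
      ({t' | ∀ i, 0 < t' i} ×ˢ {t'' | ∀ i, 0 ≤ t'' i}))
    (hFnonneg : ∀ t' t'', (∀ i, 0 < t' i) → (∀ i, 0 ≤ t'' i) → 0 ≤ F t' t'')
    (hFeq : ∀ t' t'', (∀ i, 0 < t' i) → (∀ i, 0 < t'' i) →
      F t' t'' = eval (Sum.elim t' t'') R / eval (Sum.elim t' t'') Q) :
    (∀ t', (∀ i, 0 < t' i) → F t' 0 = 0) ∨
    ∃ R' Q' : MvPolynomial (Fin m) ℝ, IsPosPoly R' ∧ IsPosPoly Q' ∧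
      ∀ t', (∀ i, 0 < t' i) → F t' 0 = eval t' R' / eval t' Q' := by
  classical
  have hRne : R.support.Nonempty := MvPolynomial.support_nonempty.mpr hR.1
  have hQne : Q.support.Nonempty := MvPolynomial.support_nonempty.mpr hQ.1
  set a := R.support.inf' hRne SFAux.deg2 with ha_def
  set b := Q.support.inf' hQne SFAux.deg2 with hb_def
  have haR : ∀ d ∈ R.support, a ≤ SFAux.deg2 d := fun d hd => Finset.inf'_le _ hd
  have hbQ : ∀ d ∈ Q.support, b ≤ SFAux.deg2 d := fun d hd => Finset.inf'_le _ hd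
  have haex : ∃ d ∈ R.support, SFAux.deg2 d = a := by
    obtain ⟨d, hd, h⟩ := Finset.exists_mem_eq_inf' hRne SFAux.deg2
    exact ⟨d, hd, h.symm⟩
  have hbex : ∃ d ∈ Q.support, SFAux.deg2 d = b := by
    obtain ⟨d, hd, h⟩ := Finset.exists_mem_eq_inf' hQne SFAux.deg2
    exact ⟨d, hd, h.symm⟩
  -- the key limit along the diagonal path
  have key : ∀ t' : Fin m → ℝ, (∀ i, 0 < t' i) →
      Filter.Tendsto
        (fun s : ℝ => (s ^ a * SFAux.uFun R a t' s) / (s ^ b * SFAux.uFun Q b t' s))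
        (nhdsWithin 0 (Set.Ioi 0)) (nhds (F t' 0)) := by
    intro t' ht'
    have hmem : ((t', (0 : Fin p → ℝ)) : (Fin m → ℝ) × (Fin p → ℝ)) ∈
        ({t' | ∀ i, 0 < t' i} ×ˢ {t'' | ∀ i, 0 ≤ t'' i}) :=
      ⟨ht', fun i => le_refl 0⟩
    have hg : Filter.Tendsto (fun s : ℝ => ((t', fun _ => s) : (Fin m → ℝ) × (Fin p → ℝ)))
        (nhdsWithin 0 (Set.Ioi 0))
        (nhdsWithin (t', 0) ({t' | ∀ i, 0 < t' i} ×ˢ {t'' | ∀ i, 0 ≤ t'' i})) := by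
      rw [tendsto_nhdsWithin_iff]
      constructor
      · have hc : Continuous (fun s : ℝ => ((t', fun _ => s) : (Fin m → ℝ) × (Fin p → ℝ))) :=
          continuous_const.prodMk (continuous_pi fun _ => continuous_id)
        have h0 := hc.tendsto 0
        have : ((t', fun _ => (0:ℝ)) : (Fin m → ℝ) × (Fin p → ℝ)) = (t', 0) := by
          ext <;> rfl
        rw [this] at h0
        exact h0.mono_left nhdsWithin_le_nhds
      · filter_upwards [self_mem_nhdsWithin] with s hs
        exact ⟨ht', fun i => le_of_lt hs⟩
    have h1 : Filter.Tendsto (fun s : ℝ => F t' (fun _ => s))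
        (nhdsWithin 0 (Set.Ioi 0)) (nhds (F t' 0)) :=
      (hFcont _ hmem).tendsto.comp hg
    apply h1.congr'
    filter_upwards [self_mem_nhdsWithin] with s hs
    rw [hFeq t' (fun _ => s) ht' (fun _ => hs),
      SFAux.eval_split R a haR, SFAux.eval_split Q b hbQ]
  rcases lt_trichotomy a b with hab | hab | hab
  · -- a < b : contradiction
    exfalso
    set t' : Fin m → ℝ := fun _ => 1 with ht'_def
    have ht' : ∀ i, 0 < t' i := fun _ => one_pos
    have k := key t' ht'
    have hpow : Filter.Tendsto (fun s : ℝ => s ^ (b - a)) (nhdsWithin 0 (Set.Ioi 0))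
        (nhds 0) := by
      have h0 := (continuous_pow (b - a)).tendsto (0 : ℝ)
      rw [zero_pow (by omega : b - a ≠ 0)] at h0
      exact h0.mono_left nhdsWithin_le_nhds
    have h2 := k.mul hpow
    rw [mul_zero] at h2
    have h3 : Filter.Tendsto
        (fun s : ℝ => SFAux.uFun R a t' s / SFAux.uFun Q b t' s)
        (nhdsWithin 0 (Set.Ioi 0)) (nhds 0) := by
      apply h2.congr'
      filter_upwards [self_mem_nhdsWithin] with s hs
      have hs0 : s ≠ 0 := ne_of_gt hs
      have hb' : s ^ b = s ^ a * s ^ (b - a) := by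
        rw [← pow_add]; congr 1; omega
      rw [hb']
      by_cases hB : SFAux.uFun Q b t' s = 0
      · simp [hB]
      · field_simp
    have hQ0 : 0 < SFAux.uFun Q b t' 0 := by
      rw [SFAux.uFun_zero Q b hbQ t']
      exact SFAux.lowPart_eval_pos Q hQ b hbex t' ht'
    have hR0 : 0 < SFAux.uFun R a t' 0 := by
      rw [SFAux.uFun_zero R a haR t']
      exact SFAux.lowPart_eval_pos R hR a haex t' ht'
    have h4 : Filter.Tendsto
        (fun s : ℝ => SFAux.uFun R a t' s / SFAux.uFun Q b t' s)
        (nhdsWithin 0 (Set.Ioi 0)) (nhds (SFAux.uFun R a t' 0 / SFAux.uFun Q b t' 0)) :=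
      (((SFAux.uFun_continuous R a t').tendsto 0).div
        ((SFAux.uFun_continuous Q b t').tendsto 0) (ne_of_gt hQ0)).mono_left
        nhdsWithin_le_nhds
    have := tendsto_nhds_unique h3 h4
    have hpos : 0 < SFAux.uFun R a t' 0 / SFAux.uFun Q b t' 0 := div_pos hR0 hQ0
    rw [← this] at hpos
    exact lt_irrefl 0 hpos
  · -- a = b : subtraction-free representation
    refine Or.inr ⟨SFAux.lowPart R a, SFAux.lowPart Q b,
      SFAux.lowPart_isPos R hR a haex, SFAux.lowPart_isPos Q hQ b hbex, ?_⟩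
    intro t' ht'
    have k := key t' ht'
    have h3 : Filter.Tendsto
        (fun s : ℝ => SFAux.uFun R a t' s / SFAux.uFun Q b t' s)
        (nhdsWithin 0 (Set.Ioi 0)) (nhds (F t' 0)) := by
      apply k.congr'
      filter_upwards [self_mem_nhdsWithin] with s hs
      rw [← hab, mul_div_mul_left _ _ (pow_ne_zero a (ne_of_gt hs))]
    have hQ0 : 0 < SFAux.uFun Q b t' 0 := by
      rw [SFAux.uFun_zero Q b hbQ t']
      exact SFAux.lowPart_eval_pos Q hQ b hbex t' ht'
    have h4 : Filter.Tendsto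
        (fun s : ℝ => SFAux.uFun R a t' s / SFAux.uFun Q b t' s)
        (nhdsWithin 0 (Set.Ioi 0)) (nhds (SFAux.uFun R a t' 0 / SFAux.uFun Q b t' 0)) :=
      (((SFAux.uFun_continuous R a t').tendsto 0).div
        ((SFAux.uFun_continuous Q b t').tendsto 0) (ne_of_gt hQ0)).mono_left
        nhdsWithin_le_nhds
    have huniq := tendsto_nhds_unique h3 h4
    rw [huniq, SFAux.uFun_zero R a haR t', SFAux.uFun_zero Q b hbQ t']
  · -- b < a : limit is zero
    refine Or.inl ?_
    intro t' ht'
    have k := key t' ht'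
    have hQ0 : 0 < SFAux.uFun Q b t' 0 := by
      rw [SFAux.uFun_zero Q b hbQ t']
      exact SFAux.lowPart_eval_pos Q hQ b hbex t' ht'
    have hpow : Filter.Tendsto (fun s : ℝ => s ^ (a - b)) (nhdsWithin 0 (Set.Ioi 0))
        (nhds 0) := by
      have h0 := (continuous_pow (a - b)).tendsto (0 : ℝ)
      rw [zero_pow (by omega : a - b ≠ 0)] at h0
      exact h0.mono_left nhdsWithin_le_nhds
    have hdivt : Filter.Tendsto
        (fun s : ℝ => SFAux.uFun R a t' s / SFAux.uFun Q b t' s)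
        (nhdsWithin 0 (Set.Ioi 0)) (nhds (SFAux.uFun R a t' 0 / SFAux.uFun Q b t' 0)) :=
      (((SFAux.uFun_continuous R a t').tendsto 0).div
        ((SFAux.uFun_continuous Q b t').tendsto 0) (ne_of_gt hQ0)).mono_left
        nhdsWithin_le_nhds
    have h4 := hpow.mul hdivt
    rw [zero_mul] at h4
    have h5 : Filter.Tendsto
        (fun s : ℝ => (s ^ a * SFAux.uFun R a t' s) / (s ^ b * SFAux.uFun Q b t' s))
        (nhdsWithin 0 (Set.Ioi 0)) (nhds 0) := by
      apply h4.congr'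
      filter_upwards [self_mem_nhdsWithin] with s hs
      have ha' : s ^ a = s ^ b * s ^ (a - b) := by
        rw [← pow_add]; congr 1; omega
      rw [ha', mul_assoc, mul_div_mul_left _ _ (pow_ne_zero b (ne_of_gt hs)),
        mul_div_assoc]
    exact tendsto_nhds_unique k h5
end

section
/- Let A be a compact topological space and Cone(A) = (A × ℝ_{≥0})/(A × {0}) the open cone over A with cone point c. Suppose X is a topological space with a distinguished point x₀, equipped with: (i) a continuous ℝ_{>0}-action ϑ on X fixing x₀, (ii) a continuous 'radius' function given by identifying, for each x ≠ x₀, a unique time t₁(x) with ϑ(t₁(x), x) ∈ S for a fixed compact subset S ⊂ X \ {x₀}, continuously in x, and (iii) the properties that ϑ(t, x) → x₀ uniformly over x ∈ S as t → 0⁺ and that for any sequence x_n → x₀ with x_n ≠ x₀ one has t₁(x_n) → ∞. Then the map sending x₀ ↦ c and x ↦ (ϑ(t₁(x), x), 1/t₁(x)) is a homeomorphism X → Cone(S). -/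
open Set Filter Topology

/-- The setoid on `A × ℝ≥0` collapsing `A × {0}` to a point. -/
def coneSetoid (A : Type*) : Setoid (A × NNReal) where
  r p q := p = q ∨ (p.2 = 0 ∧ q.2 = 0)
  iseqv := by
    refine ⟨fun p => Or.inl rfl, ?_, ?_⟩
    · rintro p q (rfl | ⟨h1, h2⟩)
      · exact Or.inl rfl
      · exact Or.inr ⟨h2, h1⟩
    · rintro p q r (rfl | ⟨h1, h2⟩) h
      · exact h
      · rcases h with rfl | ⟨h3, h4⟩
        · exact Or.inr ⟨h1, h2⟩
        · exact Or.inr ⟨h1, h4⟩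

/-- The open cone over `A`: the quotient `(A × ℝ≥0)/(A × {0})`. -/
def OpenCone (A : Type*) : Type _ := Quotient (coneSetoid A)

instance (A : Type*) [TopologicalSpace A] : TopologicalSpace (OpenCone A) :=
  instTopologicalSpaceQuotient

/-- The canonical projection to the open cone. -/
def coneMk {A : Type*} (p : A × NNReal) : OpenCone A := Quotient.mk (coneSetoid A) p

/-- Abstract cone lemma: a space with a continuous `ℝ_{>0}`-action contracting to a base
point `x₀`, with a continuous unique crossing-time function `t₁` for a compact section
`S`, is homeomorphic to the open cone over `S`, via `x ↦ (ϑ(t₁(x), x), 1/t₁(x))`. -/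
theorem homeomorph_cone_of_contracting_action
    {X : Type*} [TopologicalSpace X] (x₀ : X) (S : Set X)
    (hScpt : IsCompact S) (hSne : S.Nonempty) (hx₀S : x₀ ∉ S)
    (ϑ : ℝ → X → X)
    (hcont : ContinuousOn (fun p : ℝ × X => ϑ p.1 p.2) (Ioi (0 : ℝ) ×ˢ univ))
    (hone : ∀ x, ϑ 1 x = x)
    (hmul : ∀ s t : ℝ, 0 < s → 0 < t → ∀ x, ϑ s (ϑ t x) = ϑ (s * t) x)
    (hfix : ∀ t : ℝ, 0 < t → ϑ t x₀ = x₀)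
    (t₁ : X → ℝ)
    (ht₁pos : ∀ x, x ≠ x₀ → 0 < t₁ x)
    (ht₁S : ∀ x, x ≠ x₀ → ϑ (t₁ x) x ∈ S)
    (ht₁uniq : ∀ x, x ≠ x₀ → ∀ t : ℝ, 0 < t → ϑ t x ∈ S → t = t₁ x)
    (ht₁cont : ContinuousOn t₁ {x | x ≠ x₀})
    (hunif : ∀ U ∈ nhds x₀, ∃ δ > (0 : ℝ), ∀ t : ℝ, 0 < t → t < δ → ∀ x ∈ S, ϑ t x ∈ U)
    (hdiv : Tendsto t₁ (nhdsWithin x₀ {x | x ≠ x₀}) atTop) :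
    ∃ e : X ≃ₜ OpenCone ↥S,
      (∀ a : ↥S, e x₀ = coneMk ((a, 0) : ↥S × NNReal)) ∧
      ∀ x, (hx : x ≠ x₀) →
        e x = coneMk ((⟨ϑ (t₁ x) x, ht₁S x hx⟩, Real.toNNReal (1 / t₁ x)) : ↥S × NNReal) := by
  classical
  obtain ⟨a₀, ha₀⟩ := hSne
  have hx₀ne : ∀ a ∈ S, a ≠ x₀ := fun a ha h => hx₀S (h ▸ ha)
  -- inverse cancellation
  have hinv : ∀ t : ℝ, 0 < t → ∀ x, ϑ t⁻¹ (ϑ t x) = x := by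
    intro t ht x
    rw [hmul _ _ (by positivity) ht, inv_mul_cancel₀ ht.ne', hone]
  have hne : ∀ t : ℝ, 0 < t → ∀ a ∈ S, ϑ t a ≠ x₀ := by
    intro t ht a ha h
    have h2 := hinv t ht a
    rw [h, hfix _ (by positivity)] at h2
    exact hx₀ne a ha h2.symm
  -- joint continuity at points with positive time
  have hϑca : ∀ (t : ℝ) (x : X), 0 < t →
      ContinuousAt (fun p : ℝ × X => ϑ p.1 p.2) (t, x) := by
    intro t x ht
    exact hcont.continuousAt ((isOpen_Ioi.prod isOpen_univ).mem_nhds ⟨ht, mem_univ x⟩)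
  have ht₁calc : ∀ (r : ℝ), 0 < r → ∀ a ∈ S, t₁ (ϑ r a) = r⁻¹ := by
    intro r hr a ha
    refine (ht₁uniq _ (hne r hr a ha) r⁻¹ (by positivity) ?_).symm
    rw [hinv r hr a]; exact ha
  -- the punctured neighborhood filter at x₀ is nontrivial
  have hnebot : (𝓝[{x | x ≠ x₀}] x₀).NeBot := by
    refine ⟨fun hbot => ?_⟩
    have hempty : (∅ : Set X) ∈ 𝓝[{x | x ≠ x₀}] x₀ := by rw [hbot]; exact mem_bot
    obtain ⟨u, hu, hx₀u, husub⟩ := mem_nhdsWithin.mp hempty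
    have hux₀ : u ∈ 𝓝 x₀ := hu.mem_nhds hx₀u
    obtain ⟨δ, hδ, hδ'⟩ := hunif u hux₀
    have hmem := hδ' (δ / 2) (by positivity) (by linarith) a₀ ha₀
    have : ϑ (δ / 2) a₀ ≠ x₀ := hne _ (by positivity) a₀ ha₀
    exact husub ⟨hmem, this⟩
  -- the complement of the base point is open
  have hopen : IsOpen {x : X | x ≠ x₀} := by
    rw [isOpen_iff_mem_nhds]
    intro x hx
    by_contra hmem
    have hcl : x ∈ closure ({x₀} : Set X) := by
      rw [mem_closure_iff]
      intro o ho hxo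
      by_contra hoe
      refine hmem (Filter.mem_of_superset (ho.mem_nhds hxo) fun y hy hy0 => ?_)
      exact hoe ⟨y, hy, hy0⟩
    have ht := ht₁pos x hx
    have haS : ϑ (t₁ x) x ∈ S := ht₁S x hx
    set a : X := ϑ (t₁ x) x with ha
    have hca : ContinuousAt (fun y : X => ϑ (t₁ x) y) x :=
      (hϑca (t₁ x) x ht).comp (continuousAt_const.prodMk continuousAt_id)
    have hacl : a ∈ closure ({x₀} : Set X) := by
      have := mem_closure_image hca hcl
      rwa [Set.image_singleton, hfix _ ht] at this
    have hane : a ≠ x₀ := hx₀ne a haS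
    have ht₁a : t₁ a = 1 := (ht₁uniq a hane 1 one_pos (by rw [hone]; exact haS)).symm
    have hcw : ContinuousWithinAt t₁ {x | x ≠ x₀} a := ht₁cont a hane
    have hIio : t₁ ⁻¹' Iio 2 ∈ 𝓝[{x | x ≠ x₀}] a := by
      apply hcw
      rw [ht₁a]
      exact Iio_mem_nhds one_lt_two
    obtain ⟨o, ho, hao, hosub⟩ := mem_nhdsWithin.mp hIio
    have hx₀o : x₀ ∈ o := by
      rcases (mem_closure_iff.mp hacl) o ho hao with ⟨y, hyo, hy0⟩
      rwa [mem_singleton_iff.mp hy0] at hyo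
    have h1 : {x | x ≠ x₀} ∩ o ∈ 𝓝[{x | x ≠ x₀}] x₀ :=
      inter_mem_nhdsWithin _ (ho.mem_nhds hx₀o)
    have h2 : t₁ ⁻¹' Ici 2 ∈ 𝓝[{x | x ≠ x₀}] x₀ := hdiv (eventually_ge_atTop 2)
    obtain ⟨y, ⟨hyne, hyo⟩, hyt⟩ := Filter.nonempty_of_mem (Filter.inter_mem h1 h2)
    exact absurd (hosub ⟨hyo, hyne⟩) (by simpa using hyt)
  -- the forward map
  set aS : ↥S := ⟨a₀, ha₀⟩ with haSdef
  set c : OpenCone ↥S := coneMk ((aS, (0 : NNReal))) with hcdef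
  have hconeeq : ∀ a b : ↥S,
      coneMk ((a, 0) : ↥S × NNReal) = coneMk ((b, 0) : ↥S × NNReal) :=
    fun a b => Quotient.sound (Or.inr ⟨rfl, rfl⟩)
  set f : X → OpenCone ↥S := fun x =>
    if h : x = x₀ then c
    else coneMk ((⟨ϑ (t₁ x) x, ht₁S x h⟩, Real.toNNReal (1 / t₁ x)) : ↥S × NNReal)
    with hfdef
  -- the backward map
  set F : ↥S × NNReal → X := fun p => if p.2 = (0 : NNReal) then x₀ else ϑ (p.2 : ℝ) (p.1 : X)
    with hFdef
  have hFresp : ∀ p q : ↥S × NNReal, (coneSetoid ↥S).r p q → F p = F q := by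
    rintro p q (rfl | ⟨h1, h2⟩)
    · rfl
    · simp [hFdef, h1, h2]
  set g : OpenCone ↥S → X := Quotient.lift F hFresp with hgdef
  have hgmk : ∀ p : ↥S × NNReal, g (coneMk p) = F p := fun p => rfl
  -- left inverse
  have hgf : ∀ x, g (f x) = x := by
    intro x
    by_cases h : x = x₀
    · rw [h]
      show g (f x₀) = x₀
      simp [hfdef, hcdef, hgmk, hFdef]
    · have ht := ht₁pos x h
      have hpos : (0 : ℝ) < 1 / t₁ x := by positivity
      have hnz : Real.toNNReal (1 / t₁ x) ≠ 0 := (Real.toNNReal_pos.mpr hpos).ne'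
      simp only [hfdef, dif_neg h, hgmk, hFdef, if_neg hnz]
      rw [Real.coe_toNNReal _ hpos.le, one_div]
      exact hinv (t₁ x) ht x
  -- right inverse
  have hfg : ∀ q, f (g q) = q := by
    intro q
    rcases q with ⟨a, r⟩
    by_cases hr : r = 0
    · subst hr
      have : g (coneMk ((a, 0) : ↥S × NNReal)) = x₀ := by
        rw [hgmk]; simp [hFdef]
      show f (g (coneMk ((a, 0) : ↥S × NNReal))) = coneMk ((a, 0) : ↥S × NNReal)
      rw [this]
      simp only [hfdef, dif_pos rfl, hcdef]
      exact hconeeq _ _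
    · have hrpos : (0 : ℝ) < (r : ℝ) := by positivity
      have hFval : g (coneMk ((a, r) : ↥S × NNReal)) = ϑ (r : ℝ) (a : X) := by
        rw [hgmk]; simp [hFdef, hr]
      have hxne : ϑ (r : ℝ) (a : X) ≠ x₀ := hne _ hrpos _ a.2
      have ht1 : t₁ (ϑ (r : ℝ) (a : X)) = (r : ℝ)⁻¹ := ht₁calc _ hrpos _ a.2
      show f (g (coneMk ((a, r) : ↥S × NNReal))) = coneMk ((a, r) : ↥S × NNReal)
      rw [hFval]
      simp only [hfdef, dif_neg hxne]
      refine congrArg coneMk (Prod.ext ?_ ?_)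
      · apply Subtype.ext
        show ϑ (t₁ (ϑ (r : ℝ) (a : X))) (ϑ (r : ℝ) (a : X)) = (a : X)
        rw [ht1]
        exact hinv (r : ℝ) hrpos (a : X)
      · show Real.toNNReal (1 / t₁ (ϑ (r : ℝ) (a : X))) = r
        rw [ht1, one_div, inv_inv, Real.toNNReal_coe]
  -- continuity of F (hence of g)
  have hFcont : Continuous F := by
    rw [continuous_iff_continuousAt]
    rintro ⟨a, r⟩
    by_cases hr : r = 0
    · subst hr
      have hF0 : F (a, 0) = x₀ := by simp [hFdef]
      rw [ContinuousAt, hF0, Filter.tendsto_def]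
      intro U hU
      obtain ⟨δ, hδ, hδ'⟩ := hunif U hU
      have hmem : {p : ↥S × NNReal | ((p.2 : ℝ)) < δ} ∈ 𝓝 ((a, 0) : ↥S × NNReal) := by
        have hco : Continuous fun p : ↥S × NNReal => (p.2 : ℝ) :=
          NNReal.continuous_coe.comp continuous_snd
        exact (isOpen_Iio.preimage hco).mem_nhds (by simpa using hδ)
      filter_upwards [hmem] with p hp
      by_cases h0 : p.2 = 0
      · show F p ∈ U
        simp only [hFdef, if_pos h0]
        exact mem_of_mem_nhds hU
      · show F p ∈ U
        simp only [hFdef, if_neg h0]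
        exact hδ' _ (by positivity) hp _ p.1.2
    · have hev : (fun p : ↥S × NNReal => ϑ (p.2 : ℝ) (p.1 : X)) =ᶠ[𝓝 (a, r)] F := by
        have hop : IsOpen {p : ↥S × NNReal | p.2 ≠ 0} :=
          isOpen_ne.preimage continuous_snd
        filter_upwards [hop.mem_nhds hr] with p hp
        simp [hFdef, hp]
      have h1 : ContinuousAt (fun p : ↥S × NNReal => (((p.2 : ℝ)), (p.1 : X))) (a, r) :=
        ((NNReal.continuous_coe.comp continuous_snd).prodMk
          (continuous_subtype_val.comp continuous_fst)).continuousAt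
      have hrpos : (0 : ℝ) < (r : ℝ) := NNReal.coe_pos.mpr (zero_lt_iff.mpr hr)
      have hca2 : ContinuousAt (fun p : ↥S × NNReal => ϑ ((p.2 : ℝ)) ((p.1 : X))) (a, r) :=
        Filter.Tendsto.comp (hϑca (r : ℝ) (a : X) hrpos) h1
      exact hca2.congr_of_eventuallyEq hev.symm
  have hgcont : Continuous g := hFcont.quotient_lift hFresp
  have hmkcont : Continuous (coneMk : ↥S × NNReal → OpenCone ↥S) := continuous_quotient_mk'
  -- continuity of f on the complement of x₀
  have hfon : ContinuousOn f {x : X | x ≠ x₀} := by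
    rw [continuousOn_iff_continuous_restrict]
    have heq : ({x : X | x ≠ x₀}.domRestrict f) = fun y : {x : X | x ≠ x₀} =>
        coneMk ((⟨ϑ (t₁ (y : X)) (y : X), ht₁S _ y.2⟩,
          Real.toNNReal (1 / t₁ (y : X))) : ↥S × NNReal) := by
      funext y
      simp only [domRestrict_apply, hfdef, dif_neg y.2]
    rw [heq]
    have ht₁r : Continuous fun y : {x : X | x ≠ x₀} => t₁ (y : X) :=
      continuousOn_iff_continuous_restrict.mp ht₁cont
    have hϑr : Continuous fun y : {x : X | x ≠ x₀} => ϑ (t₁ (y : X)) (y : X) := by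
      refine hcont.comp_continuous (ht₁r.prodMk continuous_subtype_val) ?_
      exact fun y => ⟨ht₁pos _ y.2, mem_univ _⟩
    refine hmkcont.comp (Continuous.prodMk ?_ ?_)
    · exact hϑr.subtype_mk _
    · exact continuous_real_toNNReal.comp
        (continuous_const.div ht₁r fun y => (ht₁pos _ y.2).ne')
  have hfcont : Continuous f := by
    rw [continuous_iff_continuousAt]
    intro x
    by_cases h : x = x₀
    · rw [h]
      have hfx : f x₀ = c := by simp [hfdef]
      rw [ContinuousAt, hfx, Filter.tendsto_def]
      intro V hV
      obtain ⟨V', hV'sub, hV'open, hcV'⟩ := mem_nhds_iff.mp hV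
      have hWopen : IsOpen (coneMk ⁻¹' V' : Set (↥S × NNReal)) := hV'open.preimage hmkcont
      have hsub : (univ : Set ↥S) ×ˢ ({0} : Set NNReal) ⊆ coneMk ⁻¹' V' := by
        rintro ⟨a, r⟩ ⟨-, hr⟩
        rw [mem_singleton_iff] at hr
        subst hr
        show coneMk ((a, 0) : ↥S × NNReal) ∈ V'
        rw [hconeeq a ⟨a₀, ha₀⟩]
        exact hcV'
      have hScS : CompactSpace ↥S := isCompact_iff_compactSpace.mp hScpt
      obtain ⟨u, v, hu, hv, hSu, h0v, huv⟩ :=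
        generalized_tube_lemma isCompact_univ isCompact_singleton hWopen hsub
      obtain ⟨ε, hε, hεsub⟩ := NNReal.nhds_zero_basis.mem_iff.mp
        (hv.mem_nhds (h0v rfl))
      have hdivmem : t₁ ⁻¹' Ioi ((ε : ℝ)⁻¹) ∈ 𝓝[{x | x ≠ x₀}] x₀ :=
        hdiv (eventually_gt_atTop _)
      obtain ⟨o, ho, hx₀o, hosub⟩ := mem_nhdsWithin.mp hdivmem
      refine Filter.mem_of_superset (ho.mem_nhds hx₀o) fun y hy => ?_
      by_cases hy0 : y = x₀
      · subst hy0
        show f y ∈ V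
        rw [hfx]
        exact hV'sub hcV'
      · have hty : (ε : ℝ)⁻¹ < t₁ y := hosub ⟨hy, hy0⟩
        have htpos := ht₁pos y hy0
        have hεpos : (0 : ℝ) < (ε : ℝ) := hε
        have hlt : 1 / t₁ y < (ε : ℝ) := by
          rw [one_div]
          exact inv_lt_of_inv_lt₀ hεpos hty
        have hrv : Real.toNNReal (1 / t₁ y) ∈ v := by
          apply hεsub
          exact (Real.toNNReal_lt_iff_lt_coe (by positivity)).mpr hlt
        show f y ∈ V
        apply hV'sub
        simp only [hfdef, dif_neg hy0]
        exact huv ⟨hSu (mem_univ _), hrv⟩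
    · exact hfon.continuousAt (hopen.mem_nhds h)
  -- assemble the homeomorphism
  refine ⟨⟨⟨f, g, hgf, hfg⟩, hfcont, hgcont⟩, ?_, ?_⟩
  · intro a
    show f x₀ = coneMk ((a, 0) : ↥S × NNReal)
    simp only [hfdef, dif_pos rfl, hcdef]
    exact hconeeq _ _
  · intro x hx
    show f x = _
    simp only [hfdef, dif_neg hx]
end

section
/- Let n ≥ 1 and k ∈ {0,…,n}. Define the set Bound(k,n) of bounded affine permutations: bijections f : ℤ → ℤ with f(i+n) = f(i) + n for all i, (1/n)·Σ_{i=1}^n (f(i) − i) = k, and i ≤ f(i) ≤ i + n for all i. For f ∈ Bound(k,n) and a ∈ ℤ, define I_a := {f(i) : i < a, f(i) ≥ a}. Then I_a is a k-element subset of the interval [a, a+n) = {a, a+1, …, a+n−1}. -/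
open Set

/-- `Nk n f a` counts the `i ∈ [a-n, a)` with `f i ≥ a`. -/
private noncomputable def Nk (n : ℕ) (f : ℤ → ℤ) (a : ℤ) : ℕ :=
  ((Finset.Ico (a - n) a).filter (fun i => a ≤ f i)).card

private theorem Nk_step (n : ℕ) (f : ℤ → ℤ) (hinj : Function.Injective f)
    (hsurj : Function.Surjective f) (hn : 1 ≤ n)
    (hbound : ∀ i : ℤ, i ≤ f i ∧ f i ≤ i + n) (a : ℤ) :
    Nk n f (a + 1) = Nk n f a := by
  rcases eq_or_lt_of_le (hbound a).1 with h | h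
  · -- case f a = a
    unfold Nk
    congr 1
    ext i
    simp only [Finset.mem_filter, Finset.mem_Ico]
    constructor
    · rintro ⟨⟨h1, h2⟩, h3⟩
      have hne : i ≠ a := by
        intro he; rw [he] at h3; omega
      exact ⟨⟨by omega, by omega⟩, by omega⟩
    · rintro ⟨⟨h1, h2⟩, h3⟩
      have hne : i ≠ a := by omega
      have hfne : f i ≠ a := fun he => hne (hinj (he.trans h))
      have := (hbound i).2
      exact ⟨⟨by omega, by omega⟩, by omega⟩
  · -- case f a > a
    obtain ⟨i0, hi0⟩ := hsurj a
    have hi0le : i0 ≤ a := by have := (hbound i0).1; omega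
    have hi0ne : i0 ≠ a := by intro he; rw [he] at hi0; omega
    have hi0lb : a - n ≤ i0 := by have := (hbound i0).2; omega
    have hi0mem : i0 ∈ (Finset.Ico (a - (n:ℤ)) a).filter (fun i => a ≤ f i) := by
      simp only [Finset.mem_filter, Finset.mem_Ico]
      exact ⟨⟨hi0lb, lt_of_le_of_ne hi0le hi0ne⟩, by omega⟩
    have hkey : (Finset.Ico (a + 1 - (n:ℤ)) (a + 1)).filter (fun i => a + 1 ≤ f i) =
        insert a (((Finset.Ico (a - (n:ℤ)) a).filter (fun i => a ≤ f i)).erase i0) := by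
      ext i
      simp only [Finset.mem_insert, Finset.mem_erase, Finset.mem_filter, Finset.mem_Ico]
      constructor
      · rintro ⟨⟨h1, h2⟩, h3⟩
        rcases eq_or_ne i a with he | he
        · exact Or.inl he
        · refine Or.inr ⟨?_, ⟨by omega, by omega⟩, by omega⟩
          intro hei; rw [hei, hi0] at h3; omega
      · rintro (he | ⟨hne, ⟨h1, h2⟩, h3⟩)
        · subst he
          exact ⟨⟨by omega, by omega⟩, by omega⟩
        · have hfne : f i ≠ a := fun hfe => hne (hinj (hfe.trans hi0.symm))
          have := (hbound i).2
          exact ⟨⟨by omega, by omega⟩, by omega⟩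
    unfold Nk
    rw [hkey, Finset.card_insert_of_notMem, Finset.card_erase_of_mem hi0mem]
    · have : 1 ≤ ((Finset.Ico (a - (n:ℤ)) a).filter (fun i => a ≤ f i)).card :=
        Finset.card_pos.mpr ⟨i0, hi0mem⟩ |>.le.trans (le_refl _) |> fun _ =>
          Finset.card_pos.mpr ⟨i0, hi0mem⟩
      omega
    · simp only [Finset.mem_erase, Finset.mem_filter, Finset.mem_Ico]
      intro hc
      exact absurd hc.2.1.2 (by omega)

private theorem Nk_const (n : ℕ) (f : ℤ → ℤ) (hinj : Function.Injective f)
    (hsurj : Function.Surjective f) (hn : 1 ≤ n)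
    (hbound : ∀ i : ℤ, i ≤ f i ∧ f i ≤ i + n) (a : ℤ) :
    Nk n f a = Nk n f 0 := by
  induction a using Int.induction_on with
  | zero => rfl
  | succ m ih =>
    rw [Nk_step n f hinj hsurj hn hbound m, ih]
  | pred m ih =>
    have hs := Nk_step n f hinj hsurj hn hbound (-(m : ℤ) - 1)
    have h2 : (-(m : ℤ) - 1 + 1) = -(m : ℤ) := by ring
    rw [h2] at hs
    show Nk n f (-(m : ℤ) - 1) = Nk n f 0
    rw [← hs, ih]

private theorem Nk_val (n k : ℕ) (f : ℤ → ℤ) (hinj : Function.Injective f)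
    (hsurj : Function.Surjective f) (hn : 1 ≤ n)
    (hper : ∀ i : ℤ, f (i + n) = f i + n)
    (hav : ∑ i ∈ Finset.Icc (1 : ℤ) (n : ℤ), (f i - i) = (k : ℤ) * n)
    (hbound : ∀ i : ℤ, i ≤ f i ∧ f i ≤ i + n) :
    Nk n f 0 = k := by
  set I : Finset ℤ := Finset.Icc (1 : ℤ) (n : ℤ) with hI
  set B : Finset ℤ := Finset.Ioc (1 : ℤ) (2 * n + 1) with hB
  set B1 : Finset ℤ := Finset.Ioc (1 : ℤ) (n + 1) with hB1
  set B2 : Finset ℤ := Finset.Ioc ((n : ℤ) + 1) (2 * n + 1) with hB2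
  -- the ℕ-valued count M b
  set M : ℤ → ℕ := fun b => ((I.filter (fun i => i < b ∧ b ≤ f i)).card) with hM
  -- step 1: sum of cards equals k * n
  have hcard : ∀ i ∈ I, ((Finset.Ioc i (f i)).card : ℤ) = f i - i := by
    intro i _
    rw [Int.card_Ioc, Int.toNat_of_nonneg (by have := (hbound i).1; omega)]
  have h1 : (↑(∑ i ∈ I, (Finset.Ioc i (f i)).card) : ℤ) = (k : ℤ) * n := by
    push_cast
    rw [Finset.sum_congr rfl hcard, hav]
  -- step 2: per-i, Ioc i (f i) = B.filter ...
  have h2 : ∀ i ∈ I, (Finset.Ioc i (f i)).card = (B.filter (fun b => i < b ∧ b ≤ f i)).card := by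
    intro i hi
    simp only [hI, Finset.mem_Icc] at hi
    congr 1
    ext b
    simp only [hB, Finset.mem_filter, Finset.mem_Ioc]
    have := (hbound i).2
    constructor
    · rintro ⟨hb1, hb2⟩
      exact ⟨⟨by omega, by omega⟩, hb1, hb2⟩
    · rintro ⟨_, hb1, hb2⟩
      exact ⟨hb1, hb2⟩
  -- step 3: swap sums
  have h3 : ∑ i ∈ I, (Finset.Ioc i (f i)).card = ∑ b ∈ B, M b := by
    rw [Finset.sum_congr rfl h2]
    simp only [Finset.card_filter]
    rw [Finset.sum_comm]
    simp only [hM, Finset.card_filter]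
  -- step 4: split B and reindex
  have hsplit : ∑ b ∈ B, M b = ∑ b ∈ B1, M b + ∑ b ∈ B2, M b := by
    rw [hB, hB1, hB2, ← Finset.sum_union]
    · congr 1
      rw [Finset.Ioc_union_Ioc_eq_Ioc (by omega) (by push_cast; omega)]
    · rw [Finset.disjoint_left]
      intro x hx hx'
      simp only [Finset.mem_Ioc] at hx hx'
      omega
  have hreidx : ∑ b ∈ B2, M b = ∑ b ∈ B1, M (b + n) := by
    rw [hB2, hB1]
    have : Finset.Ioc ((n : ℤ) + 1) (2 * n + 1) =
        (Finset.Ioc (1 : ℤ) (n + 1)).map (addRightEmbedding (n : ℤ)) := by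
      rw [Finset.map_add_right_Ioc]
      congr 1 <;> ring
    rw [this, Finset.sum_map]
    rfl
  -- step 5: M b + M (b + n) = Nk n f b for b ∈ B1
  have h5 : ∀ b ∈ B1, M b + M (b + n) = Nk n f b := by
    intro b hb
    simp only [hB1, Finset.mem_Ioc] at hb
    have hMb : M b = ((Finset.Ico (1 : ℤ) b).filter (fun i => b ≤ f i)).card := by
      show (I.filter (fun i => i < b ∧ b ≤ f i)).card = _
      congr 1
      ext i
      simp only [hI, Finset.mem_filter, Finset.mem_Icc, Finset.mem_Ico]
      constructor
      · rintro ⟨⟨h1', h2'⟩, h3', h4'⟩; exact ⟨⟨h1', h3'⟩, h4'⟩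
      · rintro ⟨⟨h1', h2'⟩, h3'⟩; exact ⟨⟨h1', by omega⟩, h2', h3'⟩
    have hMbn : M (b + n) = ((Finset.Ico b ((n : ℤ) + 1)).filter (fun i => b + n ≤ f i)).card := by
      show (I.filter (fun i => i < b + n ∧ b + n ≤ f i)).card = _
      congr 1
      ext i
      simp only [hI, Finset.mem_filter, Finset.mem_Icc, Finset.mem_Ico]
      have := (hbound i).2
      constructor
      · rintro ⟨⟨h1', h2'⟩, h3', h4'⟩
        exact ⟨⟨by omega, by omega⟩, h4'⟩
      · rintro ⟨⟨h1', h2'⟩, h3'⟩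
        have := (hbound i).2
        exact ⟨⟨by omega, by omega⟩, by omega, h3'⟩
    have hshift : ((Finset.Ico (b - (n : ℤ)) 1).filter (fun i => b ≤ f i)).card =
        ((Finset.Ico b ((n : ℤ) + 1)).filter (fun i => b + n ≤ f i)).card := by
      refine Finset.card_nbij' (fun i => i + (n : ℤ)) (fun j => j - (n : ℤ)) ?_ ?_ ?_ ?_
      · intro i hi
        simp only [Finset.mem_coe, Finset.mem_filter, Finset.mem_Ico] at hi ⊢
        refine ⟨⟨by omega, by omega⟩, ?_⟩
        rw [hper i]; omega
      · intro j hj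
        simp only [Finset.mem_coe, Finset.mem_filter, Finset.mem_Ico] at hj ⊢
        refine ⟨⟨by omega, by omega⟩, ?_⟩
        have := hper (j - n)
        have h' : j - (n : ℤ) + n = j := by ring
        rw [h'] at this
        omega
      · intro i _; ring
      · intro j _; ring
    have hNkb : Nk n f b =
        ((Finset.Ico (b - (n : ℤ)) 1).filter (fun i => b ≤ f i)).card +
        ((Finset.Ico (1 : ℤ) b).filter (fun i => b ≤ f i)).card := by
      unfold Nk
      rw [← Finset.card_union_of_disjoint, ← Finset.filter_union,
        Finset.Ico_union_Ico_eq_Ico (by omega) (by omega)]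
      exact Finset.disjoint_filter_filter
        (Finset.Ico_disjoint_Ico_consecutive _ 1 _)
    rw [hMb, hMbn, hNkb, hshift]
    omega
  -- step 6: conclude
  have h6 : ∑ b ∈ B1, Nk n f b = n * Nk n f 0 := by
    rw [Finset.sum_congr rfl (fun b _ => Nk_const n f hinj hsurj hn hbound b)]
    rw [Finset.sum_const, smul_eq_mul]
    congr 1
    rw [hB1, Int.card_Ioc]
    omega
  have htot : ∑ i ∈ I, (Finset.Ioc i (f i)).card = n * Nk n f 0 := by
    rw [h3, hsplit, hreidx, ← h6, ← Finset.sum_add_distrib]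
    exact Finset.sum_congr rfl h5
  rw [htot] at h1
  have : (n : ℤ) * (Nk n f 0 : ℤ) = (k : ℤ) * n := by push_cast at h1 ⊢; linarith
  have hn' : (n : ℤ) ≠ 0 := by positivity
  have := mul_right_cancel₀ hn' (by linarith [this] : (Nk n f 0 : ℤ) * n = (k : ℤ) * n)
  exact_mod_cast this

/-- For a bounded affine permutation `f ∈ Bound(k,n)` and any `a ∈ ℤ`, the Grassmann
necklace term `I_a = {f(i) : i < a, f(i) ≥ a}` is a `k`-element subset of `[a, a+n)`. -/
theorem grassmann_necklace_card_and_subset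
    (n k : ℕ) (hn : 1 ≤ n) (hk : k ≤ n)
    (f : ℤ → ℤ) (hbij : Function.Bijective f)
    (hper : ∀ i : ℤ, f (i + n) = f i + n)
    (hav : ∑ i ∈ Finset.Icc (1 : ℤ) (n : ℤ), (f i - i) = (k : ℤ) * n)
    (hbound : ∀ i : ℤ, i ≤ f i ∧ f i ≤ i + n)
    (a : ℤ) :
    {j : ℤ | ∃ i : ℤ, i < a ∧ a ≤ f i ∧ f i = j}.Finite ∧
    {j : ℤ | ∃ i : ℤ, i < a ∧ a ≤ f i ∧ f i = j}.ncard = k ∧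
    {j : ℤ | ∃ i : ℤ, i < a ∧ a ≤ f i ∧ f i = j} ⊆ Ico a (a + n) := by
  obtain ⟨hinj, hsurj⟩ := hbij
  set A : Finset ℤ := (Finset.Ico (a - (n : ℤ)) a).filter (fun i => a ≤ f i) with hA
  have hset : {j : ℤ | ∃ i : ℤ, i < a ∧ a ≤ f i ∧ f i = j} = ↑(A.image f) := by
    ext j
    simp only [mem_setOf_eq, Finset.coe_image, Set.mem_image, Finset.mem_coe, hA,
      Finset.mem_filter, Finset.mem_Ico]
    constructor
    · rintro ⟨i, h1, h2, h3⟩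
      have := (hbound i).2
      exact ⟨i, ⟨⟨by omega, h1⟩, h2⟩, h3⟩
    · rintro ⟨i, ⟨⟨_, h1⟩, h2⟩, h3⟩
      exact ⟨i, h1, h2, h3⟩
  refine ⟨?_, ?_, ?_⟩
  · rw [hset]; exact (A.image f).finite_toSet
  · rw [hset, Set.ncard_coe_finset, Finset.card_image_of_injective _ hinj]
    have : A.card = Nk n f a := rfl
    rw [this, Nk_const n f hinj hsurj hn hbound a,
      Nk_val n k f hinj hsurj hn hper hav hbound]
  · rintro j ⟨i, h1, h2, h3⟩
    have := (hbound i).2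
    simp only [mem_Ico]
    omega
end
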